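/- arXiv:1611.01593 — 4 statements merged into one kernel-verified Lean document; each statement's English description precedes it below -/
import Mathlib

section
/- For a function f : ℂ → ℂ continuous on the real axis {z ∈ ℂ : Im z = 0}, the following statements are equivalent: (a) for every complex Hilbert space H and all bounded self-adjoint operators A, B on H, ‖f(A) − f(B)‖ ≤ ‖A − B‖; (b) for every complex Hilbert space H, every bounded self-adjoint operator A on H and every bounded linear operator R on H, ‖f(A)R − Rf(A)‖ ≤ ‖AR − RA‖; (c) for every complex Hilbert space H, all bounded self-adjoint operators A, B on H and every bounded linear operator R on H, ‖f(A)R − Rf(B)‖ ≤ ‖AR − RB‖. -/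
set_option maxHeartbeats 1000000
set_option synthInstance.maxHeartbeats 400000

open ContinuousLinearMap

noncomputable section Blocks

variable (H : Type) [NormedAddCommGroup H] [InnerProductSpace ℂ H] [CompleteSpace H]

local notation "𝔼" => WithLp 2 (H × H)

def eL : 𝔼 ≃L[ℂ] H × H := WithLp.prodContinuousLinearEquiv 2 ℂ H H

variable {H}

/-- block diagonal operator -/
def dg (A B : H →L[ℂ] H) : 𝔼 →L[ℂ] 𝔼 :=
  (((eL H).symm : (H × H) →L[ℂ] 𝔼).comp (A.prodMap B)).comp ((eL H) : 𝔼 →L[ℂ] H × H)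

/-- block antidiagonal operator: `(x₁, x₂) ↦ (X x₂, Y x₁)` -/
def ad (X Y : H →L[ℂ] H) : 𝔼 →L[ℂ] 𝔼 :=
  (((eL H).symm : (H × H) →L[ℂ] 𝔼).comp
    ((X.comp (ContinuousLinearMap.snd ℂ H H)).prod (Y.comp (ContinuousLinearMap.fst ℂ H H)))).comp
    ((eL H) : 𝔼 →L[ℂ] H × H)

@[simp] lemma eL_fst (x : 𝔼) : ((eL H) x).1 = x.fst := rfl
@[simp] lemma eL_snd (x : 𝔼) : ((eL H) x).2 = x.snd := rfl
@[simp] lemma eL_symm_fst (p : H × H) : (((eL H).symm) p).fst = p.1 := rfl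
@[simp] lemma eL_symm_snd (p : H × H) : (((eL H).symm) p).snd = p.2 := rfl

lemma dg_apply (A B : H →L[ℂ] H) (x : 𝔼) :
    dg A B x = (eL H).symm (A ((eL H) x).1, B ((eL H) x).2) := rfl

lemma ad_apply (X Y : H →L[ℂ] H) (x : 𝔼) :
    ad X Y x = (eL H).symm (X ((eL H) x).2, Y ((eL H) x).1) := rfl

lemma dg_mul_dg (A B A' B' : H →L[ℂ] H) : dg A B * dg A' B' = dg (A * A') (B * B') := by
  ext x <;> simp [mul_apply, dg_apply]

lemma dg_mul_ad (A B X Y : H →L[ℂ] H) : dg A B * ad X Y = ad (A * X) (B * Y) := by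
  ext x <;> simp [mul_apply, dg_apply, ad_apply]

lemma ad_mul_dg (A B X Y : H →L[ℂ] H) : ad X Y * dg A B = ad (X * B) (Y * A) := by
  ext x <;> simp [mul_apply, dg_apply, ad_apply]

lemma dg_one : dg (1 : H →L[ℂ] H) 1 = 1 := by
  ext x
  rfl

lemma dg_sub (A B A' B' : H →L[ℂ] H) : dg A B - dg A' B' = dg (A - A') (B - B') := by
  ext x
  simp only [ContinuousLinearMap.sub_apply, dg_apply, ← map_sub]
  rfl

lemma ad_sub (X Y X' Y' : H →L[ℂ] H) : ad X Y - ad X' Y' = ad (X - X') (Y - Y') := by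
  ext x
  simp only [ContinuousLinearMap.sub_apply, ad_apply, ← map_sub]
  rfl

lemma dg_add (A B A' B' : H →L[ℂ] H) : dg A B + dg A' B' = dg (A + A') (B + B') := by
  ext x
  simp only [ContinuousLinearMap.add_apply, dg_apply, ← map_add]
  rfl

lemma dg_smul (c : ℂ) (A B : H →L[ℂ] H) : c • dg A B = dg (c • A) (c • B) := by
  ext x
  simp only [ContinuousLinearMap.smul_apply, dg_apply]
  rw [← Prod.smul_mk, ← map_smul]

lemma dg_adjoint (A B : H →L[ℂ] H) : star (dg A B) = dg (star A) (star B) := by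
  rw [star_eq_adjoint, star_eq_adjoint, star_eq_adjoint]
  symm
  exact (ContinuousLinearMap.eq_adjoint_iff _ _).mpr fun x y => by
    simp [dg_apply, WithLp.prod_inner_apply, adjoint_inner_left]

lemma ad_adjoint (X Y : H →L[ℂ] H) : star (ad X Y) = ad (star Y) (star X) := by
  rw [star_eq_adjoint, star_eq_adjoint, star_eq_adjoint]
  symm
  exact (ContinuousLinearMap.eq_adjoint_iff _ _).mpr fun x y => by
    simp [ad_apply, WithLp.prod_inner_apply, adjoint_inner_left, add_comm]


lemma ad_norm_sq (X Y : H →L[ℂ] H) (x : 𝔼) :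
    ‖ad X Y x‖ ^ 2 = ‖X x.snd‖ ^ 2 + ‖Y x.fst‖ ^ 2 := by
  rw [WithLp.prod_norm_sq_eq_of_L2]
  congr 1 <;> simp [ad_apply]

lemma norm_sq_eq (x : 𝔼) : ‖x‖ ^ 2 = ‖x.fst‖ ^ 2 + ‖x.snd‖ ^ 2 :=
  WithLp.prod_norm_sq_eq_of_L2 x

lemma norm_ad_le (X Y : H →L[ℂ] H) : ‖ad X Y‖ ≤ max ‖X‖ ‖Y‖ := by
  refine ContinuousLinearMap.opNorm_le_bound _ ((norm_nonneg X).trans (le_max_left _ _))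
    fun x => ?_
  have h2 : ‖ad X Y x‖ ^ 2 ≤ (max ‖X‖ ‖Y‖ * ‖x‖) ^ 2 := by
    rw [ad_norm_sq]
    have hX : ‖X x.snd‖ ≤ ‖X‖ * ‖x.snd‖ := X.le_opNorm _
    have hY : ‖Y x.fst‖ ≤ ‖Y‖ * ‖x.fst‖ := Y.le_opNorm _
    have hXm : ‖X‖ ≤ max ‖X‖ ‖Y‖ := le_max_left _ _
    have hYm : ‖Y‖ ≤ max ‖X‖ ‖Y‖ := le_max_right _ _
    have hx : ‖x‖ ^ 2 = ‖x.fst‖ ^ 2 + ‖x.snd‖ ^ 2 := norm_sq_eq x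
    have hm : (0:ℝ) ≤ max ‖X‖ ‖Y‖ := (norm_nonneg X).trans (le_max_left _ _)
    have e2 : ‖X x.snd‖ ≤ max ‖X‖ ‖Y‖ * ‖x.snd‖ :=
      hX.trans (mul_le_mul_of_nonneg_right hXm (norm_nonneg _))
    have e1 : ‖Y x.fst‖ ≤ max ‖X‖ ‖Y‖ * ‖x.fst‖ :=
      hY.trans (mul_le_mul_of_nonneg_right hYm (norm_nonneg _))
    calc ‖X x.snd‖ ^ 2 + ‖Y x.fst‖ ^ 2
        ≤ (max ‖X‖ ‖Y‖ * ‖x.snd‖) ^ 2 + (max ‖X‖ ‖Y‖ * ‖x.fst‖) ^ 2 :=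
          add_le_add (pow_le_pow_left₀ (norm_nonneg _) e2 2)
            (pow_le_pow_left₀ (norm_nonneg _) e1 2)
      _ = (max ‖X‖ ‖Y‖) ^ 2 * (‖x.fst‖ ^ 2 + ‖x.snd‖ ^ 2) := by ring
      _ = (max ‖X‖ ‖Y‖ * ‖x‖) ^ 2 := by rw [← hx]; ring
  have h0 : (0:ℝ) ≤ max ‖X‖ ‖Y‖ * ‖x‖ :=
    mul_nonneg ((norm_nonneg X).trans (le_max_left _ _)) (norm_nonneg x)
  nlinarith [norm_nonneg (ad X Y x)]

lemma norm_le_norm_ad (X Y : H →L[ℂ] H) : ‖X‖ ≤ ‖ad X Y‖ := by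
  refine ContinuousLinearMap.opNorm_le_bound _ (norm_nonneg _) fun y => ?_
  set v : 𝔼 := (eL H).symm (0, y) with hv
  have hvn : ‖v‖ = ‖y‖ := by
    have := norm_sq_eq v
    simp only [hv, eL_symm_fst, eL_symm_snd, norm_zero] at this
    nlinarith [norm_nonneg v, norm_nonneg y]
  have happ : ‖ad X Y v‖ ^ 2 = ‖X y‖ ^ 2 := by
    rw [ad_norm_sq]
    simp [hv]
  have h1 : ‖ad X Y v‖ = ‖X y‖ := by
    nlinarith [norm_nonneg (ad X Y v), norm_nonneg (X y)]
  calc ‖X y‖ = ‖ad X Y v‖ := h1.symm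
    _ ≤ ‖ad X Y‖ * ‖v‖ := (ad X Y).le_opNorm v
    _ = ‖ad X Y‖ * ‖y‖ := by rw [hvn]

lemma norm_ad_zero (X : H →L[ℂ] H) : ‖ad X (0 : H →L[ℂ] H)‖ = ‖X‖ := by
  refine le_antisymm ?_ (norm_le_norm_ad X 0)
  have h := norm_ad_le X (0 : H →L[ℂ] H)
  rwa [norm_zero, max_eq_left (norm_nonneg X)] at h


/-- the diagonal embedding as a star algebra homomorphism -/
def dgHom : ((H →L[ℂ] H) × (H →L[ℂ] H)) →⋆ₐ[ℂ] (𝔼 →L[ℂ] 𝔼) where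
  toFun p := dg p.1 p.2
  map_one' := dg_one
  map_mul' p q := (dg_mul_dg _ _ _ _).symm
  map_zero' := by
    ext x
    simp [dg_apply]
  map_add' p q := (dg_add _ _ _ _).symm
  commutes' r := by
    show dg (algebraMap ℂ _ r) (algebraMap ℂ _ r) = algebraMap ℂ _ r
    rw [Algebra.algebraMap_eq_smul_one (A := H →L[ℂ] H),
      Algebra.algebraMap_eq_smul_one (A := 𝔼 →L[ℂ] 𝔼), ← dg_smul, dg_one]
  map_star' p := by
    show dg (star p.1) (star p.2) = star (dg p.1 p.2)
    rw [dg_adjoint]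

lemma dgHom_continuous : Continuous (dgHom (H := H)) := by
  have : (dgHom (H := H) : ((H →L[ℂ] H) × (H →L[ℂ] H)) → (𝔼 →L[ℂ] 𝔼)) =
      fun p => ((((eL H).symm : (H × H) →L[ℂ] 𝔼).comp (ContinuousLinearMap.prodMapL ℂ H H H H p)).comp
        ((eL H) : 𝔼 →L[ℂ] H × H)) := by
    funext p
    show dg p.1 p.2 = _
    rw [ContinuousLinearMap.prodMapL_apply]
    rfl
  rw [this]
  exact (continuous_const.clm_comp (ContinuousLinearMap.prodMapL ℂ H H H H).continuous).clm_comp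
    continuous_const

lemma contOn_of_selfAdjoint {A : Type*} [CStarAlgebra A] {f : ℂ → ℂ}
    (hf : ContinuousOn f {z | z.im = 0}) {a : A} (ha : IsSelfAdjoint a) :
    ContinuousOn f (spectrum ℂ a) := by
  refine hf.mono fun z hz => ?_
  have h := SpectrumRestricts.real_iff.mp ha.spectrumRestricts z hz
  show z.im = 0
  rw [h]
  simp

lemma cfc_dg {f : ℂ → ℂ} (hf : ContinuousOn f {z | z.im = 0}) (A B : H →L[ℂ] H)
    (hA : IsSelfAdjoint A) (hB : IsSelfAdjoint B) :
    cfc f (dg A B) = dg (cfc f A) (cfc f B) := by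
  have hab : IsSelfAdjoint ((A, B) : (H →L[ℂ] H) × (H →L[ℂ] H)) := by
    rw [IsSelfAdjoint, Prod.star_def, Prod.mk.injEq]
    exact ⟨hA, hB⟩
  have habn : IsStarNormal ((A, B) : (H →L[ℂ] H) × (H →L[ℂ] H)) := hab.isStarNormal
  have hfab : ContinuousOn f (spectrum ℂ ((A, B) : (H →L[ℂ] H) × (H →L[ℂ] H))) :=
    contOn_of_selfAdjoint hf hab
  have hd : IsSelfAdjoint (dg A B) := by
    rw [IsSelfAdjoint, dg_adjoint, hA.star_eq, hB.star_eq]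
  have h1 : dgHom (cfc f ((A, B) : (H →L[ℂ] H) × (H →L[ℂ] H))) = cfc f (dg A B) := by
    have := StarAlgHomClass.map_cfc (dgHom (H := H)) f
      ((A, B) : (H →L[ℂ] H) × (H →L[ℂ] H)) hfab dgHom_continuous habn
      (by show IsStarNormal (dg A B); exact hd.isStarNormal)
    exact this
  have h2 : cfc f ((A, B) : (H →L[ℂ] H) × (H →L[ℂ] H)) = (cfc f A, cfc f B) := by
    have hfst := StarAlgHomClass.map_cfc (StarAlgHom.fst ℂ (H →L[ℂ] H) (H →L[ℂ] H)) f
      ((A, B) : (H →L[ℂ] H) × (H →L[ℂ] H)) hfab continuous_fst habn hA.isStarNormal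
    have hsnd := StarAlgHomClass.map_cfc (StarAlgHom.snd ℂ (H →L[ℂ] H) (H →L[ℂ] H)) f
      ((A, B) : (H →L[ℂ] H) × (H →L[ℂ] H)) hfab continuous_snd habn hB.isStarNormal
    exact Prod.ext hfst hsnd
  rw [← h1, h2]
  rfl

end Blocks


open ContinuousLinearMap NormedSpace

noncomputable section Anal

variable {𝔄 : Type*} [CStarAlgebra 𝔄]

/-- conjugation by a unitary as a star algebra homomorphism -/
def conjHom (u : unitary 𝔄) : 𝔄 →⋆ₐ[ℂ] 𝔄 where
  toFun x := u * x * (star u : 𝔄)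
  map_one' := by
    show (u : 𝔄) * 1 * (star u : 𝔄) = 1
    rw [mul_one, Unitary.mul_star_self_of_mem u.prop]
  map_mul' x y := by
    have h : star (u : 𝔄) * (u : 𝔄) = 1 := Unitary.star_mul_self_of_mem u.prop
    calc (u : 𝔄) * (x * y) * (star u : 𝔄)
        = (u : 𝔄) * (x * (((star u : 𝔄) * u) * y)) * (star u : 𝔄) := by rw [h, one_mul]
      _ = (u : 𝔄) * x * (star u : 𝔄) * ((u : 𝔄) * y * (star u : 𝔄)) := by
          simp only [mul_assoc]
  map_zero' := by simp
  map_add' x y := by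
    show (u : 𝔄) * (x + y) * (star u : 𝔄) = _
    rw [mul_add, add_mul]
  commutes' r := by
    simp [Algebra.algebraMap_eq_smul_one, mul_smul_comm, smul_mul_assoc,
      Unitary.mul_star_self_of_mem u.prop]
  map_star' x := by
    simp [star_mul, mul_assoc]

lemma conjHom_continuous (u : unitary 𝔄) : Continuous (conjHom u) := by
  show Continuous fun x : 𝔄 => (u : 𝔄) * x * (star u : 𝔄)
  exact (continuous_mul_left _).mul continuous_const

lemma isSelfAdjoint_conj (u : unitary 𝔄) {a : 𝔄} (ha : IsSelfAdjoint a) :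
    IsSelfAdjoint ((u : 𝔄) * a * (star u : 𝔄)) := by
  rw [IsSelfAdjoint]
  simp [star_mul, mul_assoc, ha.star_eq]

lemma cfc_conj {f : ℂ → ℂ} (hf : ContinuousOn f {z | z.im = 0}) (u : unitary 𝔄) {a : 𝔄}
    (ha : IsSelfAdjoint a) :
    cfc f ((u : 𝔄) * a * (star u : 𝔄)) = (u : 𝔄) * cfc f a * (star u : 𝔄) :=
  (StarAlgHomClass.map_cfc (conjHom u) f a (contOn_of_selfAdjoint hf ha)
    (conjHom_continuous u) ha.isStarNormal (isSelfAdjoint_conj u ha).isStarNormal).symm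


open Filter Topology

section Steps

variable {H' : Type} [NormedAddCommGroup H'] [InnerProductSpace ℂ H'] [CompleteSpace H']

lemma step_unitary {f : ℂ → ℂ} (hf : ContinuousOn f {z : ℂ | z.im = 0})
    (hP : ∀ (H : Type) [NormedAddCommGroup H] [InnerProductSpace ℂ H] [CompleteSpace H]
        (A B : H →L[ℂ] H), IsSelfAdjoint A → IsSelfAdjoint B →
        ‖cfc f A - cfc f B‖ ≤ ‖A - B‖)
    (A : H' →L[ℂ] H') (hA : IsSelfAdjoint A) (u : unitary (H' →L[ℂ] H')) :
    ‖cfc f A * (u : H' →L[ℂ] H') - (u : H' →L[ℂ] H') * cfc f A‖ ≤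
      ‖A * (u : H' →L[ℂ] H') - (u : H' →L[ℂ] H') * A‖ := by
  set C := cfc f A with hC
  set B := (u : H' →L[ℂ] H') * A * star (u : H' →L[ℂ] H') with hBdef
  have hB : IsSelfAdjoint B := isSelfAdjoint_conj u hA
  have hfB : cfc f B = (u : H' →L[ℂ] H') * C * star (u : H' →L[ℂ] H') := cfc_conj hf u hA
  have h2 : star (u : H' →L[ℂ] H') * (u : H' →L[ℂ] H') = 1 :=
    Unitary.star_mul_self_of_mem u.prop
  have key : ∀ X Y : H' →L[ℂ] H',
      (X - (u : H' →L[ℂ] H') * Y * star (u : H' →L[ℂ] H')) * (u : H' →L[ℂ] H') =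
        X * (u : H' →L[ℂ] H') - (u : H' →L[ℂ] H') * Y := by
    intro X Y
    rw [sub_mul, mul_assoc ((u : H' →L[ℂ] H') * Y), h2, mul_one]
  calc ‖C * (u : H' →L[ℂ] H') - (u : H' →L[ℂ] H') * C‖
      = ‖(C - (u : H' →L[ℂ] H') * C * star (u : H' →L[ℂ] H')) * (u : H' →L[ℂ] H')‖ := by
        rw [key]
    _ = ‖C - (u : H' →L[ℂ] H') * C * star (u : H' →L[ℂ] H')‖ := CStarRing.norm_mul_coe_unitary _ u
    _ = ‖cfc f A - cfc f B‖ := by rw [hfB, hC]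
    _ ≤ ‖A - B‖ := hP H' A B hA hB
    _ = ‖(A - B) * (u : H' →L[ℂ] H')‖ := (CStarRing.norm_mul_coe_unitary _ u).symm
    _ = ‖A * (u : H' →L[ℂ] H') - (u : H' →L[ℂ] H') * A‖ := by rw [hBdef, key]

lemma step_selfadjoint {f : ℂ → ℂ} (hf : ContinuousOn f {z : ℂ | z.im = 0})
    (hP : ∀ (H : Type) [NormedAddCommGroup H] [InnerProductSpace ℂ H] [CompleteSpace H]
        (A B : H →L[ℂ] H), IsSelfAdjoint A → IsSelfAdjoint B →
        ‖cfc f A - cfc f B‖ ≤ ‖A - B‖)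
    (A S : H' →L[ℂ] H') (hA : IsSelfAdjoint A) (hS : IsSelfAdjoint S) :
    ‖cfc f A * S - S * cfc f A‖ ≤ ‖A * S - S * A‖ := by
  set C := cfc f A with hC
  set K : H' →L[ℂ] H' := Complex.I • S with hK
  have hKskew : ∀ t : ℝ, (t • K) ∈ skewAdjoint (H' →L[ℂ] H') := by
    intro t
    rw [skewAdjoint.mem_iff, star_smul, star_trivial, hK, star_smul, Complex.star_def,
      Complex.conj_I, hS.star_eq, neg_smul, smul_neg]
  set g : ℝ → (H' →L[ℂ] H') := fun t => exp (t • K) with hg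
  have hgu : ∀ t, g t ∈ unitary (H' →L[ℂ] H') := fun t =>
    by letI : NormedAlgebra ℚ (H' →L[ℂ] H') := .restrictScalars ℚ ℂ _; exact exp_mem_unitary_of_mem_skewAdjoint (hKskew t)
  have hgd : HasDerivAt g K 0 := by
    have h := hasDerivAt_exp_smul_const (𝕂 := ℝ) K (0 : ℝ)
    simpa [hg] using h
  have hg0 : g 0 = 1 := by simp [hg]
  set F : ℝ → (H' →L[ℂ] H') := fun t => C * g t - g t * C with hF
  set G : ℝ → (H' →L[ℂ] H') := fun t => A * g t - g t * A with hG
  have hFd : HasDerivAt F (C * K - K * C) 0 := (hgd.const_mul C).sub (hgd.mul_const C)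
  have hGd : HasDerivAt G (A * K - K * A) 0 := (hgd.const_mul A).sub (hgd.mul_const A)
  have hF0 : F 0 = 0 := by rw [hF]; simp [hg0]
  have hG0 : G 0 = 0 := by rw [hG]; simp [hg0]
  have htF : Tendsto (fun t => ‖slope F 0 t‖) (𝓝[≠] (0:ℝ)) (𝓝 ‖C * K - K * C‖) :=
    (continuous_norm.tendsto _).comp (hasDerivAt_iff_tendsto_slope.mp hFd)
  have htG : Tendsto (fun t => ‖slope G 0 t‖) (𝓝[≠] (0:ℝ)) (𝓝 ‖A * K - K * A‖) :=
    (continuous_norm.tendsto _).comp (hasDerivAt_iff_tendsto_slope.mp hGd)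
  have hle : ∀ t : ℝ, ‖slope F 0 t‖ ≤ ‖slope G 0 t‖ := by
    intro t
    have hFt : slope F 0 t = (t : ℝ)⁻¹ • F t := by
      rw [slope_def_module, hF0, sub_zero, sub_zero]
    have hGt : slope G 0 t = (t : ℝ)⁻¹ • G t := by
      rw [slope_def_module, hG0, sub_zero, sub_zero]
    rw [hFt, hGt, norm_smul, norm_smul]
    refine mul_le_mul_of_nonneg_left ?_ (norm_nonneg _)
    exact step_unitary hf hP A hA ⟨g t, hgu t⟩
  have hmain : ‖C * K - K * C‖ ≤ ‖A * K - K * A‖ := le_of_tendsto_of_tendsto' htF htG hle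
  have eK : ∀ X : H' →L[ℂ] H', X * K - K * X = Complex.I • (X * S - S * X) := by
    intro X
    rw [hK, mul_smul_comm, smul_mul_assoc, smul_sub]
  rw [eK, eK] at hmain
  rwa [norm_smul, norm_smul, Complex.norm_I, one_mul, one_mul] at hmain

end Steps

end Anal


open Filter Topology in
/-- For `f : ℂ → ℂ` continuous on the real axis, the following are equivalent:
(a) `‖f(A) - f(B)‖ ≤ ‖A - B‖` for all bounded self-adjoint `A`, `B`;
(b) `‖f(A)R - Rf(A)‖ ≤ ‖AR - RA‖` for every bounded self-adjoint `A` and every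
bounded operator `R`;
(c) `‖f(A)R - Rf(B)‖ ≤ ‖AR - RB‖` for all bounded self-adjoint `A`, `B` and
every bounded operator `R`. -/
theorem stmt_9 (f : ℂ → ℂ) (hf : ContinuousOn f {z : ℂ | z.im = 0}) :
    ((∀ (H : Type) [NormedAddCommGroup H] [InnerProductSpace ℂ H] [CompleteSpace H]
        (A B : H →L[ℂ] H), IsSelfAdjoint A → IsSelfAdjoint B →
        ‖cfc f A - cfc f B‖ ≤ ‖A - B‖) ↔
      (∀ (H : Type) [NormedAddCommGroup H] [InnerProductSpace ℂ H] [CompleteSpace H]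
        (A R : H →L[ℂ] H), IsSelfAdjoint A →
        ‖cfc f A * R - R * cfc f A‖ ≤ ‖A * R - R * A‖)) ∧
    ((∀ (H : Type) [NormedAddCommGroup H] [InnerProductSpace ℂ H] [CompleteSpace H]
        (A R : H →L[ℂ] H), IsSelfAdjoint A →
        ‖cfc f A * R - R * cfc f A‖ ≤ ‖A * R - R * A‖) ↔
      (∀ (H : Type) [NormedAddCommGroup H] [InnerProductSpace ℂ H] [CompleteSpace H]
        (A B R : H →L[ℂ] H), IsSelfAdjoint A → IsSelfAdjoint B →
        ‖cfc f A * R - R * cfc f B‖ ≤ ‖A * R - R * B‖)) := by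
  have hsaDG : ∀ (H : Type) [NormedAddCommGroup H] [InnerProductSpace ℂ H] [CompleteSpace H]
      (A B : H →L[ℂ] H), IsSelfAdjoint A → IsSelfAdjoint B → IsSelfAdjoint (dg A B) := by
    intro H _ _ _ A B hA hB
    rw [IsSelfAdjoint, dg_adjoint, hA.star_eq, hB.star_eq]
  -- (b) → (c)
  have hQR : (∀ (H : Type) [NormedAddCommGroup H] [InnerProductSpace ℂ H] [CompleteSpace H]
        (A R : H →L[ℂ] H), IsSelfAdjoint A →
        ‖cfc f A * R - R * cfc f A‖ ≤ ‖A * R - R * A‖) →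
      (∀ (H : Type) [NormedAddCommGroup H] [InnerProductSpace ℂ H] [CompleteSpace H]
        (A B R : H →L[ℂ] H), IsSelfAdjoint A → IsSelfAdjoint B →
        ‖cfc f A * R - R * cfc f B‖ ≤ ‖A * R - R * B‖) := by
    intro hQ H _ _ _ A B R hA hB
    have hsa : IsSelfAdjoint (dg A B) := hsaDG H A B hA hB
    have h := hQ (WithLp 2 (H × H)) (dg A B) (ad R 0) hsa
    rw [cfc_dg hf A B hA hB] at h
    rw [dg_mul_ad, ad_mul_dg, ad_sub, dg_mul_ad, ad_mul_dg, ad_sub] at h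
    rw [mul_zero, zero_mul, sub_zero, mul_zero, zero_mul, sub_zero] at h
    rwa [norm_ad_zero, norm_ad_zero] at h
  -- (c) → (b)
  have hRQ : (∀ (H : Type) [NormedAddCommGroup H] [InnerProductSpace ℂ H] [CompleteSpace H]
        (A B R : H →L[ℂ] H), IsSelfAdjoint A → IsSelfAdjoint B →
        ‖cfc f A * R - R * cfc f B‖ ≤ ‖A * R - R * B‖) →
      (∀ (H : Type) [NormedAddCommGroup H] [InnerProductSpace ℂ H] [CompleteSpace H]
        (A R : H →L[ℂ] H), IsSelfAdjoint A →
        ‖cfc f A * R - R * cfc f A‖ ≤ ‖A * R - R * A‖) := by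
    intro hR H _ _ _ A R hA
    exact hR H A A R hA hA
  -- (c) → (a)
  have hRP : (∀ (H : Type) [NormedAddCommGroup H] [InnerProductSpace ℂ H] [CompleteSpace H]
        (A B R : H →L[ℂ] H), IsSelfAdjoint A → IsSelfAdjoint B →
        ‖cfc f A * R - R * cfc f B‖ ≤ ‖A * R - R * B‖) →
      (∀ (H : Type) [NormedAddCommGroup H] [InnerProductSpace ℂ H] [CompleteSpace H]
        (A B : H →L[ℂ] H), IsSelfAdjoint A → IsSelfAdjoint B →
        ‖cfc f A - cfc f B‖ ≤ ‖A - B‖) := by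
    intro hR H _ _ _ A B hA hB
    have h := hR H A B 1 hA hB
    rwa [mul_one, one_mul, mul_one, one_mul] at h
  -- (a) → (b)
  have hPQ : (∀ (H : Type) [NormedAddCommGroup H] [InnerProductSpace ℂ H] [CompleteSpace H]
        (A B : H →L[ℂ] H), IsSelfAdjoint A → IsSelfAdjoint B →
        ‖cfc f A - cfc f B‖ ≤ ‖A - B‖) →
      (∀ (H : Type) [NormedAddCommGroup H] [InnerProductSpace ℂ H] [CompleteSpace H]
        (A R : H →L[ℂ] H), IsSelfAdjoint A →
        ‖cfc f A * R - R * cfc f A‖ ≤ ‖A * R - R * A‖) := by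
    intro hP H _ _ _ A R hA
    set C := cfc f A with hCdef
    have hsa : IsSelfAdjoint (dg A A) := hsaDG H A A hA hA
    have hRt : IsSelfAdjoint (ad R (star R)) := by
      rw [IsSelfAdjoint, ad_adjoint, star_star]
    have h := step_selfadjoint hf hP (dg A A) (ad R (star R)) hsa hRt
    rw [cfc_dg hf A A hA hA, ← hCdef] at h
    rw [dg_mul_ad, ad_mul_dg, ad_sub, dg_mul_ad, ad_mul_dg, ad_sub] at h
    have hstar : A * star R - star R * A = -star (A * R - R * A) := by
      rw [star_sub, star_mul, star_mul, hA.star_eq]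
      abel
    calc ‖C * R - R * C‖ ≤ ‖ad (C * R - R * C) (C * star R - star R * C)‖ :=
          norm_le_norm_ad _ _
      _ ≤ ‖ad (A * R - R * A) (A * star R - star R * A)‖ := h
      _ ≤ max ‖A * R - R * A‖ ‖A * star R - star R * A‖ := norm_ad_le _ _
      _ = ‖A * R - R * A‖ := by
          rw [hstar, norm_neg, norm_star, max_self]
  exact ⟨⟨hPQ, fun hQ => hRP (hQR hQ)⟩, hQR, hRQ⟩
end

section
/- Let F be a closed subset of ℂ and let f : ℂ → ℂ be continuous on F. The following statements are equivalent: (a) for every complex Hilbert space H, every bounded normal operator N on H with spectrum in F and every bounded linear operator R on H, ‖f(N)R − Rf(N)‖ ≤ ‖NR − RN‖; (b) for every complex Hilbert space H, all bounded normal operators N₁, N₂ on H with spectra in F and every bounded linear operator R on H, ‖f(N₁)R − Rf(N₂)‖ ≤ ‖N₁R − RN₂‖; (c) for every complex Hilbert space H, all bounded normal operators N₁, N₂ on H with spectra in F and every bounded self-adjoint operator A on H, ‖f(N₁)A − Af(N₂)‖ ≤ ‖N₁A − AN₂‖. -/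
noncomputable section

open ContinuousLinearMap

set_option linter.unusedSectionVars false

namespace Stmt11Aux

variable {H : Type} [NormedAddCommGroup H] [InnerProductSpace ℂ H] [CompleteSpace H]

abbrev E (H : Type) [NormedAddCommGroup H] [InnerProductSpace ℂ H] := WithLp 2 (H × H)

def eqE : E H ≃L[ℂ] H × H := WithLp.prodContinuousLinearEquiv 2 ℂ H H

/-- block diagonal operator -/
def dg (P Q : H →L[ℂ] H) : E H →L[ℂ] E H :=
  (eqE.symm.toContinuousLinearMap.comp ((P.prodMap Q).comp eqE.toContinuousLinearMap))

/-- upper-right corner operator -/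
def cr (X : H →L[ℂ] H) : E H →L[ℂ] E H :=
  (eqE.symm.toContinuousLinearMap.comp
    (((X.comp (ContinuousLinearMap.snd ℂ H H)).prod 0).comp eqE.toContinuousLinearMap))

/-- lower-left corner operator -/
def cl (Y : H →L[ℂ] H) : E H →L[ℂ] E H :=
  (eqE.symm.toContinuousLinearMap.comp
    (((0 : (H × H) →L[ℂ] H).prod (Y.comp (ContinuousLinearMap.fst ℂ H H))).comp
      eqE.toContinuousLinearMap))

@[simp] lemma dg_apply_fst (P Q : H →L[ℂ] H) (x : E H) : (dg P Q x).fst = P x.fst := rfl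
@[simp] lemma dg_apply_snd (P Q : H →L[ℂ] H) (x : E H) : (dg P Q x).snd = Q x.snd := rfl
@[simp] lemma cr_apply_fst (X : H →L[ℂ] H) (x : E H) : (cr X x).fst = X x.snd := rfl
@[simp] lemma cr_apply_snd (X : H →L[ℂ] H) (x : E H) : (cr X x).snd = 0 := rfl
@[simp] lemma cl_apply_fst (Y : H →L[ℂ] H) (x : E H) : (cl Y x).fst = 0 := rfl
@[simp] lemma cl_apply_snd (Y : H →L[ℂ] H) (x : E H) : (cl Y x).snd = Y x.fst := rfl

lemma E_ext {x y : E H} (h1 : x.fst = y.fst) (h2 : x.snd = y.snd) : x = y :=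
  WithLp.ofLp_injective 2 (Prod.ext h1 h2)

lemma dg_mul (P Q P' Q' : H →L[ℂ] H) : dg P Q * dg P' Q' = dg (P * P') (Q * Q') := by
  ext x : 1; exact E_ext rfl rfl

lemma dg_mul_cr (P Q X : H →L[ℂ] H) : dg P Q * cr X = cr (P * X) := by
  ext x : 1
  refine E_ext rfl ?_
  simp

lemma cr_mul_dg (P Q X : H →L[ℂ] H) : cr X * dg P Q = cr (X * Q) := by
  ext x : 1; exact E_ext rfl rfl

lemma dg_mul_cl (P Q Y : H →L[ℂ] H) : dg P Q * cl Y = cl (Q * Y) := by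
  ext x : 1
  refine E_ext ?_ rfl
  simp

lemma cl_mul_dg (P Q Y : H →L[ℂ] H) : cl Y * dg P Q = cl (Y * P) := by
  ext x : 1; exact E_ext rfl rfl

lemma cr_sub (X Y : H →L[ℂ] H) : cr X - cr Y = cr (X - Y) := by
  ext x : 1; exact E_ext rfl (by simp)

/-! ### star facts -/

lemma star_dg (P Q : H →L[ℂ] H) : star (dg P Q) = dg (star P) (star Q) := by
  rw [star_eq_adjoint, star_eq_adjoint, star_eq_adjoint]
  symm
  rw [eq_adjoint_iff]
  intro x y
  rw [WithLp.prod_inner_apply, WithLp.prod_inner_apply]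
  change inner ℂ (dg (adjoint P) (adjoint Q) x).fst y.fst
      + inner ℂ (dg (adjoint P) (adjoint Q) x).snd y.snd
    = inner ℂ x.fst (dg P Q y).fst + inner ℂ x.snd (dg P Q y).snd
  simp only [WithLp.prod_inner_apply, dg_apply_fst, dg_apply_snd, adjoint_inner_left]

lemma star_cr (X : H →L[ℂ] H) : star (cr X) = cl (star X) := by
  rw [star_eq_adjoint, star_eq_adjoint]
  symm
  rw [eq_adjoint_iff]
  intro x y
  rw [WithLp.prod_inner_apply, WithLp.prod_inner_apply]
  change inner ℂ (cl (adjoint X) x).fst y.fst + inner ℂ (cl (adjoint X) x).snd y.snd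
    = inner ℂ x.fst (cr X y).fst + inner ℂ x.snd (cr X y).snd
  simp only [WithLp.prod_inner_apply, cl_apply_fst, cl_apply_snd, cr_apply_fst, cr_apply_snd,
    adjoint_inner_left, inner_zero_left, inner_zero_right, zero_add, add_zero]

lemma isSelfAdjoint_cr_add_cl_star (X : H →L[ℂ] H) : IsSelfAdjoint (cr X + cl (star X)) := by
  have h1 : star (cl (star X)) = cr X := by
    rw [← star_cr, star_star]
  rw [IsSelfAdjoint, star_add (R := E H →L[ℂ] E H), star_cr, h1]
  exact add_comm _ _

lemma isStarNormal_dg {P Q : H →L[ℂ] H} (hP : IsStarNormal P) (hQ : IsStarNormal Q) :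
    IsStarNormal (dg P Q) := by
  constructor
  show star (dg P Q) * dg P Q = dg P Q * star (dg P Q)
  rw [star_dg, dg_mul, dg_mul, hP.star_comm_self.eq, hQ.star_comm_self.eq]

/-! ### norm facts -/

lemma norm_snd_le' (x : E H) : ‖x.snd‖ ≤ ‖x‖ := by
  rw [WithLp.prod_norm_eq_of_L2]
  calc ‖x.snd‖ = Real.sqrt (‖x.snd‖ ^ 2) := by rw [Real.sqrt_sq (norm_nonneg _)]
  _ ≤ _ := Real.sqrt_le_sqrt (le_add_of_nonneg_left (by positivity))

lemma norm_cr_apply (X : H →L[ℂ] H) (x : E H) : ‖cr X x‖ = ‖X x.snd‖ := by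
  rw [WithLp.prod_norm_eq_of_L2]
  simp [Real.sqrt_sq (norm_nonneg (X x.snd))]

lemma norm_cr (X : H →L[ℂ] H) : ‖cr X‖ = ‖X‖ := by
  refine le_antisymm (opNorm_le_bound _ (norm_nonneg X) fun x => ?_)
    (opNorm_le_bound _ (norm_nonneg (cr X)) fun y => ?_)
  · rw [norm_cr_apply]
    exact (X.le_opNorm _).trans (mul_le_mul_of_nonneg_left (norm_snd_le' x) (norm_nonneg _))
  · set z : E H := eqE.symm (0, y) with hz
    have h1 : z.snd = y := rfl
    have h2 : z.fst = (0 : H) := rfl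
    have hnz : ‖z‖ = ‖y‖ := by
      rw [WithLp.prod_norm_eq_of_L2, h1, h2]
      simp [Real.sqrt_sq (norm_nonneg y)]
    calc ‖X y‖ = ‖cr X z‖ := by rw [norm_cr_apply, h1]
    _ ≤ ‖cr X‖ * ‖z‖ := (cr X).le_opNorm z
    _ = ‖cr X‖ * ‖y‖ := by rw [hnz]

lemma norm_dg_le (P Q : H →L[ℂ] H) (c : ℝ) (hc : 0 ≤ c) (hP : ‖P‖ ≤ c) (hQ : ‖Q‖ ≤ c) :
    ‖dg P Q‖ ≤ c := by
  refine opNorm_le_bound _ hc fun x => ?_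
  rw [WithLp.prod_norm_eq_of_L2, WithLp.prod_norm_eq_of_L2]
  rw [← Real.sqrt_sq (by positivity : (0:ℝ) ≤ c * √(‖x.fst‖ ^ 2 + ‖x.snd‖ ^ 2))]
  refine Real.sqrt_le_sqrt ?_
  have h1 : ‖(dg P Q x).fst‖ ≤ c * ‖x.fst‖ := by
    simpa using (P.le_opNorm x.fst).trans (mul_le_mul_of_nonneg_right hP (norm_nonneg _))
  have h2 : ‖(dg P Q x).snd‖ ≤ c * ‖x.snd‖ := by
    simpa using (Q.le_opNorm x.snd).trans (mul_le_mul_of_nonneg_right hQ (norm_nonneg _))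
  have e : (c * √(‖x.fst‖ ^ 2 + ‖x.snd‖ ^ 2)) ^ 2 = c ^ 2 * ‖x.fst‖ ^ 2 + c ^ 2 * ‖x.snd‖ ^ 2 := by
    rw [mul_pow, Real.sq_sqrt (by positivity)]; ring
  rw [e]
  have := norm_nonneg (dg P Q x).fst
  have := norm_nonneg (dg P Q x).snd
  nlinarith

/-! ### the star algebra homomorphism -/

def Phi : ((H →L[ℂ] H) × (H →L[ℂ] H)) →⋆ₐ[ℂ] (E H →L[ℂ] E H) where
  toFun P := dg P.1 P.2
  map_one' := by ext x : 1; exact E_ext rfl rfl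
  map_mul' P Q := by ext x : 1; exact E_ext rfl rfl
  map_zero' := by ext x : 1; exact E_ext rfl rfl
  map_add' P Q := by ext x : 1; exact E_ext rfl rfl
  commutes' c := by ext x : 1; exact E_ext rfl rfl
  map_star' P := by simp only [Prod.fst_star, Prod.snd_star, star_dg]

@[simp] lemma Phi_apply (P Q : H →L[ℂ] H) : Phi (P, Q) = dg P Q := rfl

lemma Phi_continuous : Continuous (Phi (H := H)) := by
  refine AddMonoidHomClass.continuous_of_bound (Phi (H := H)).toAlgHom.toLinearMap 1 fun P => ?_
  rw [one_mul]
  exact norm_dg_le P.1 P.2 ‖P‖ (norm_nonneg _) (norm_fst_le P) (norm_snd_le P)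

/-! ### spectra -/

lemma isUnit_pair {M N : Type*} [Monoid M] [Monoid N] {u : M} {v : N}
    (hu : IsUnit u) (hv : IsUnit v) : IsUnit ((u, v) : M × N) := by
  obtain ⟨U, rfl⟩ := hu; obtain ⟨V, rfl⟩ := hv
  exact ⟨⟨(U, V), ((↑U⁻¹ : M), (↑V⁻¹ : N)), Prod.ext (by simp) (by simp),
    Prod.ext (by simp) (by simp)⟩, rfl⟩

lemma spectrum_pair_subset (P Q : H →L[ℂ] H) :
    spectrum ℂ ((P, Q) : _ × _) ⊆ spectrum ℂ P ∪ spectrum ℂ Q := by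
  intro l hl
  by_contra h
  simp only [Set.mem_union, not_or] at h
  rw [spectrum.mem_iff] at hl
  exact hl <| by
    have : (algebraMap ℂ ((H →L[ℂ] H) × (H →L[ℂ] H)) l) - (P, Q)
        = ((algebraMap ℂ _ l) - P, (algebraMap ℂ _ l) - Q) := rfl
    rw [this]
    exact isUnit_pair (spectrum.notMem_iff.mp h.1) (spectrum.notMem_iff.mp h.2)

lemma spectrum_dg_subset (P Q : H →L[ℂ] H) :
    spectrum ℂ (dg P Q) ⊆ spectrum ℂ P ∪ spectrum ℂ Q :=
  (AlgHom.spectrum_apply_subset (Phi (H := H)).toAlgHom (P, Q)).trans (spectrum_pair_subset P Q)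

/-! ### cfc facts -/

lemma isStarNormal_pair {P Q : H →L[ℂ] H} (hP : IsStarNormal P) (hQ : IsStarNormal Q) :
    IsStarNormal ((P, Q) : _ × _) :=
  ⟨Prod.ext hP.star_comm_self.eq hQ.star_comm_self.eq⟩

lemma cfc_pair {P Q : H →L[ℂ] H} (hP : IsStarNormal P) (hQ : IsStarNormal Q) (f : ℂ → ℂ)
    (hf : ContinuousOn f (spectrum ℂ ((P, Q) : _ × _))) :
    cfc f ((P, Q) : _ × _) = (cfc f P, cfc f Q) := by
  have h1 := StarAlgHom.map_cfc (StarAlgHom.fst ℂ (H →L[ℂ] H) (H →L[ℂ] H)) f (P, Q)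
    hf (by exact continuous_fst) (isStarNormal_pair hP hQ) hP
  have h2 := StarAlgHom.map_cfc (StarAlgHom.snd ℂ (H →L[ℂ] H) (H →L[ℂ] H)) f (P, Q)
    hf (by exact continuous_snd) (isStarNormal_pair hP hQ) hQ
  exact Prod.ext (by simpa using h1) (by simpa using h2)

lemma cfc_dg {F : Set ℂ} (f : ℂ → ℂ) (hf : ContinuousOn f F) {P Q : H →L[ℂ] H}
    (hP : IsStarNormal P) (hQ : IsStarNormal Q)
    (hsP : spectrum ℂ P ⊆ F) (hsQ : spectrum ℂ Q ⊆ F) :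
    cfc f (dg P Q) = dg (cfc f P) (cfc f Q) := by
  have hsub : spectrum ℂ ((P, Q) : _ × _) ⊆ F :=
    (spectrum_pair_subset P Q).trans (Set.union_subset hsP hsQ)
  have hf' : ContinuousOn f (spectrum ℂ ((P, Q) : _ × _)) := hf.mono hsub
  have hdg : IsStarNormal (dg P Q) := isStarNormal_dg hP hQ
  have h := StarAlgHom.map_cfc (Phi (H := H)) f (P, Q) hf' Phi_continuous
    (isStarNormal_pair hP hQ) (by simpa using hdg)
  rw [cfc_pair hP hQ f hf'] at h
  simpa using h.symm

end Stmt11Aux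

namespace Stmt11Aux

/-- (a) ⇒ (b) via the 2×2 doubling trick with a nilpotent corner. -/
lemma step12 {F : Set ℂ} {f : ℂ → ℂ} (hf : ContinuousOn f F)
    (h : ∀ (H' : Type) [NormedAddCommGroup H'] [InnerProductSpace ℂ H'] [CompleteSpace H']
      (N R : H' →L[ℂ] H'), IsStarNormal N → spectrum ℂ N ⊆ F →
      ‖cfc f N * R - R * cfc f N‖ ≤ ‖N * R - R * N‖)
    {H : Type} [NormedAddCommGroup H] [InnerProductSpace ℂ H] [CompleteSpace H]
    (N₁ N₂ R : H →L[ℂ] H) (h1 : IsStarNormal N₁) (h2 : IsStarNormal N₂)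
    (hs1 : spectrum ℂ N₁ ⊆ F) (hs2 : spectrum ℂ N₂ ⊆ F) :
    ‖cfc f N₁ * R - R * cfc f N₂‖ ≤ ‖N₁ * R - R * N₂‖ := by
  have key := h (E H) (dg N₁ N₂) (cr R) (isStarNormal_dg h1 h2)
    ((spectrum_dg_subset _ _).trans (Set.union_subset hs1 hs2))
  rw [cfc_dg f hf h1 h2 hs1 hs2, dg_mul_cr, cr_mul_dg, cr_sub, dg_mul_cr, cr_mul_dg, cr_sub,
    norm_cr, norm_cr] at key
  exact key

/-- (c) ⇒ (b) via the 2×2 trick with scalar diagonal blocks. -/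
lemma step32 {F : Set ℂ} {f : ℂ → ℂ} (hf : ContinuousOn f F)
    (h : ∀ (H' : Type) [NormedAddCommGroup H'] [InnerProductSpace ℂ H'] [CompleteSpace H']
      (N₁ N₂ A : H' →L[ℂ] H'), IsStarNormal N₁ → IsStarNormal N₂ →
      spectrum ℂ N₁ ⊆ F → spectrum ℂ N₂ ⊆ F → IsSelfAdjoint A →
      ‖cfc f N₁ * A - A * cfc f N₂‖ ≤ ‖N₁ * A - A * N₂‖)
    {H : Type} [NormedAddCommGroup H] [InnerProductSpace ℂ H] [CompleteSpace H]
    (N₁ N₂ R : H →L[ℂ] H) (h1 : IsStarNormal N₁) (h2 : IsStarNormal N₂)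
    (hs1 : spectrum ℂ N₁ ⊆ F) (hs2 : spectrum ℂ N₂ ⊆ F) :
    ‖cfc f N₁ * R - R * cfc f N₂‖ ≤ ‖N₁ * R - R * N₂‖ := by
  rcases subsingleton_or_nontrivial (H →L[ℂ] H) with hss | hnt
  · exact le_of_eq (congrArg norm (Subsingleton.elim _ _))
  obtain ⟨μ, hμ⟩ := spectrum.nonempty N₁
  set c : H →L[ℂ] H := algebraMap ℂ (H →L[ℂ] H) μ with hcdef
  have hc : IsStarNormal c := cfc_predicate_algebraMap μ
  have hsc : spectrum ℂ c ⊆ F :=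
    (CFC.spectrum_algebraMap_subset μ).trans (Set.singleton_subset_iff.mpr (hs1 hμ))
  set A : E H →L[ℂ] E H := cr R + cl (star R) with hAdef
  have key := h (E H) (dg N₁ c) (dg c N₂) A (isStarNormal_dg h1 hc) (isStarNormal_dg hc h2)
    ((spectrum_dg_subset _ _).trans (Set.union_subset hs1 hsc))
    ((spectrum_dg_subset _ _).trans (Set.union_subset hsc hs2))
    (isSelfAdjoint_cr_add_cl_star R)
  rw [cfc_dg f hf h1 hc hs1 hsc, cfc_dg f hf hc h2 hsc hs2, cfc_algebraMap] at key
  have expand : ∀ (P Q d : H →L[ℂ] H), d * star R = star R * d →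
      dg P (d : H →L[ℂ] H) * A - A * dg d Q = cr (P * R - R * Q) := by
    intro P Q d hd
    rw [hAdef, mul_add, add_mul, dg_mul_cr, dg_mul_cl, cr_mul_dg, cl_mul_dg, hd, ← cr_sub]
    abel
  rw [expand _ _ _ (Algebra.commutes (f μ) (star R)), expand _ _ _ (Algebra.commutes μ (star R)),
    norm_cr, norm_cr] at key
  exact key

end Stmt11Aux

/-- Let `F ⊆ ℂ` be closed and `f : ℂ → ℂ` continuous on `F`. The following are
equivalent:
(a) `‖f(N)R - Rf(N)‖ ≤ ‖NR - RN‖` for every bounded normal `N` with spectrum in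
`F` and every bounded operator `R`;
(b) `‖f(N₁)R - Rf(N₂)‖ ≤ ‖N₁R - RN₂‖` for all bounded normal `N₁`, `N₂` with
spectra in `F` and every bounded operator `R`;
(c) `‖f(N₁)A - Af(N₂)‖ ≤ ‖N₁A - AN₂‖` for all bounded normal `N₁`, `N₂` with
spectra in `F` and every bounded self-adjoint operator `A`. -/
theorem stmt_11 (F : Set ℂ) (hF : IsClosed F) (f : ℂ → ℂ) (hf : ContinuousOn f F) :
    List.TFAE
      [ (∀ (H : Type) [NormedAddCommGroup H] [InnerProductSpace ℂ H] [CompleteSpace H]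
          (N R : H →L[ℂ] H), IsStarNormal N → spectrum ℂ N ⊆ F →
          ‖cfc f N * R - R * cfc f N‖ ≤ ‖N * R - R * N‖),
        (∀ (H : Type) [NormedAddCommGroup H] [InnerProductSpace ℂ H] [CompleteSpace H]
          (N₁ N₂ R : H →L[ℂ] H), IsStarNormal N₁ → IsStarNormal N₂ →
          spectrum ℂ N₁ ⊆ F → spectrum ℂ N₂ ⊆ F →
          ‖cfc f N₁ * R - R * cfc f N₂‖ ≤ ‖N₁ * R - R * N₂‖),
        (∀ (H : Type) [NormedAddCommGroup H] [InnerProductSpace ℂ H] [CompleteSpace H]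
          (N₁ N₂ A : H →L[ℂ] H), IsStarNormal N₁ → IsStarNormal N₂ →
          spectrum ℂ N₁ ⊆ F → spectrum ℂ N₂ ⊆ F → IsSelfAdjoint A →
          ‖cfc f N₁ * A - A * cfc f N₂‖ ≤ ‖N₁ * A - A * N₂‖) ] := by
  tfae_have 1 → 2 := by
    intro h H _ _ _ N₁ N₂ R h1 h2 hs1 hs2
    exact Stmt11Aux.step12 hf h N₁ N₂ R h1 h2 hs1 hs2
  tfae_have 2 → 3 := by
    intro h H _ _ _ N₁ N₂ A h1 h2 hs1 hs2 _
    exact h H N₁ N₂ A h1 h2 hs1 hs2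
  tfae_have 3 → 2 := by
    intro h H _ _ _ N₁ N₂ R h1 h2 hs1 hs2
    exact Stmt11Aux.step32 hf h N₁ N₂ R h1 h2 hs1 hs2
  tfae_have 2 → 1 := by
    intro h H _ _ _ N R hN hs
    exact h H N N R hN hN hs hs
  tfae_finish
end
end

section
/- Pointwise boundedness of difference quotients implies local operator Lipschitzness: Let f : ℝ → ℂ be continuous, and write f(A) for the continuous functional calculus of a bounded self-adjoint operator A applied to z ↦ f(Re z). Suppose that for every complex Hilbert space H and all bounded self-adjoint operators A and K on H there exist C ≥ 0 and δ > 0 such that ‖f(A + tK) − f(A)‖ ≤ C·|t| for all real t with |t| < δ. Then f is locally operator Lipschitz: for every a > 0 there exists C ≥ 0 such that for every complex Hilbert space H and all bounded self-adjoint operators A, B on H with ‖A‖ ≤ a and ‖B‖ ≤ a, ‖f(A) − f(B)‖ ≤ C·‖A − B‖. -/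
open scoped ENNReal ComplexOrder

set_option linter.unusedSectionVars false
set_option linter.deprecated false
attribute [local instance] Classical.propDecidable

noncomputable section

namespace OpLip

variable {ι : Type} {H : ι → Type} [∀ i, NormedAddCommGroup (H i)]
  [∀ i, InnerProductSpace ℂ (H i)] [∀ i, CompleteSpace (H i)]

lemma two_toReal : ((2 : ℝ≥0∞)).toReal = 2 := by simp

lemma memDiag (T : ∀ i, H i →L[ℂ] H i) {M : ℝ} (hM : ∀ i, ‖T i‖ ≤ M)
    (x : lp H 2) : Memℓp (fun i => T i (x i)) 2 := by
  apply memℓp_gen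
  have hx : Summable fun i => ‖x i‖ ^ (2 : ℝ≥0∞).toReal :=
    (memℓp_gen_iff (by norm_num [two_toReal])).mp (lp.memℓp x)
  refine Summable.of_nonneg_of_le (fun i => by positivity) (fun i => ?_)
    ((hx.mul_left (M ^ (2 : ℝ≥0∞).toReal)))
  rw [two_toReal] at *
  have h1 : ‖T i (x i)‖ ≤ M * ‖x i‖ :=
    le_trans ((T i).le_opNorm (x i)) (by
      have := hM i
      have : ‖T i‖ * ‖x i‖ ≤ M * ‖x i‖ :=
        mul_le_mul_of_nonneg_right (hM i) (norm_nonneg _)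
      linarith)
  have h0 : (0:ℝ) ≤ M := le_trans (norm_nonneg (T i)) (hM i)
  calc ‖T i (x i)‖ ^ (2:ℝ) ≤ (M * ‖x i‖) ^ (2:ℝ) :=
        Real.rpow_le_rpow (norm_nonneg _) h1 (by norm_num)
    _ = M ^ (2:ℝ) * ‖x i‖ ^ (2:ℝ) := Real.mul_rpow h0 (norm_nonneg _)

lemma lp_norm_le (x y : lp H 2) {M : ℝ} (h0 : 0 ≤ M)
    (h : ∀ i, ‖y i‖ ≤ M * ‖x i‖) : ‖y‖ ≤ M * ‖x‖ := by
  have hp : 0 < ((2:ℝ≥0∞)).toReal := by norm_num [two_toReal]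
  rw [← pow_le_pow_iff_left₀ (norm_nonneg _) (by positivity) (two_ne_zero)]
  have hy := lp.norm_rpow_eq_tsum hp y
  have hx := lp.norm_rpow_eq_tsum hp x
  rw [two_toReal] at hy hx
  have hys : Summable fun i => ‖y i‖ ^ (2:ℝ) :=
    (memℓp_gen_iff hp).mp (lp.memℓp y) |>.congr (by intro i; rw [two_toReal])
  have hxs : Summable fun i => ‖x i‖ ^ (2:ℝ) :=
    (memℓp_gen_iff hp).mp (lp.memℓp x) |>.congr (by intro i; rw [two_toReal])
  have key : ∑' i, ‖y i‖ ^ (2:ℝ) ≤ M ^ 2 * ∑' i, ‖x i‖ ^ (2:ℝ) := by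
    rw [← tsum_mul_left]
    refine Summable.tsum_le_tsum (fun i => ?_) hys (hxs.mul_left _)
    calc ‖y i‖ ^ (2:ℝ) ≤ (M * ‖x i‖) ^ (2:ℝ) :=
          Real.rpow_le_rpow (norm_nonneg _) (h i) (by norm_num)
      _ = M ^ (2:ℝ) * ‖x i‖ ^ (2:ℝ) := Real.mul_rpow h0 (norm_nonneg _)
      _ = M ^ 2 * ‖x i‖ ^ (2:ℝ) := by rw [Real.rpow_two]
  calc ‖y‖ ^ 2 = ∑' i, ‖y i‖ ^ (2:ℝ) := by
        rw [← hy, Real.rpow_two]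
    _ ≤ M ^ 2 * ∑' i, ‖x i‖ ^ (2:ℝ) := key
    _ = M ^ 2 * ‖x‖ ^ 2 := by rw [← hx, Real.rpow_two]
    _ = (M * ‖x‖) ^ 2 := by ring

/-- The block-diagonal operator on an `ℓ²`-direct sum. -/
def diag (T : ∀ i, H i →L[ℂ] H i) : lp H 2 →L[ℂ] lp H 2 :=
  if h : ∃ M : ℝ, 0 ≤ M ∧ ∀ i, ‖T i‖ ≤ M then
    LinearMap.mkContinuous
      { toFun := fun x => ⟨fun i => T i (x i), memDiag T h.choose_spec.2 x⟩
        map_add' := fun x y => by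
          apply lp.ext; funext i
          change T i ((x + y) i) = T i (x i) + T i (y i)
          rw [lp.coeFn_add, Pi.add_apply, map_add]
        map_smul' := fun c x => by
          apply lp.ext; funext i
          simp only [RingHom.id_apply, lp.coeFn_smul, Pi.smul_apply, map_smul] }
      h.choose
      (fun x => by
        refine lp_norm_le x _ h.choose_spec.1 (fun i => ?_)
        exact le_trans ((T i).le_opNorm (x i))
          (mul_le_mul_of_nonneg_right (h.choose_spec.2 i) (norm_nonneg _)))
  else 0

lemma diag_apply {T : ∀ i, H i →L[ℂ] H i} (h : ∃ M : ℝ, 0 ≤ M ∧ ∀ i, ‖T i‖ ≤ M)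
    (x : lp H 2) (i : ι) : (diag T x) i = T i (x i) := by
  rw [diag, dif_pos h]; rfl

lemma norm_diag_le {T : ∀ i, H i →L[ℂ] H i} {M : ℝ} (h0 : 0 ≤ M)
    (hM : ∀ i, ‖T i‖ ≤ M) : ‖diag T‖ ≤ M := by
  refine ContinuousLinearMap.opNorm_le_bound _ h0 (fun x => ?_)
  refine lp_norm_le x _ h0 (fun i => ?_)
  rw [diag_apply ⟨M, h0, hM⟩]
  exact le_trans ((T i).le_opNorm (x i))
    (mul_le_mul_of_nonneg_right (hM i) (norm_nonneg _))

lemma diag_single {T : ∀ i, H i →L[ℂ] H i} (h : ∃ M : ℝ, 0 ≤ M ∧ ∀ i, ‖T i‖ ≤ M)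
    (i : ι) (v : H i) :
    diag T (lp.single 2 i v) = lp.single 2 i (T i v) := by
  apply lp.ext; funext j
  rw [diag_apply h]
  rcases eq_or_ne j i with rfl | hj
  · rw [lp.single_apply_self, lp.single_apply_self]
  · rw [lp.single_apply_ne _ _ _ hj, lp.single_apply_ne _ _ _ hj, map_zero]

lemma norm_le_norm_diag {T : ∀ i, H i →L[ℂ] H i}
    (h : ∃ M : ℝ, 0 ≤ M ∧ ∀ i, ‖T i‖ ≤ M) (i : ι) : ‖T i‖ ≤ ‖diag T‖ := by
  refine ContinuousLinearMap.opNorm_le_bound _ (norm_nonneg _) (fun v => ?_)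
  have hp : 0 < ((2:ℝ≥0∞)).toReal := by norm_num [two_toReal]
  have h1 : ‖T i v‖ = ‖lp.single 2 i (T i v)‖ := by
    have := lp.norm_single (E := H) (p := 2) (by norm_num) i (T i v)
    simpa using this.symm
  have h2 : ‖(v : H i)‖ = ‖lp.single 2 i v‖ := by
    have := lp.norm_single (E := H) (p := 2) (by norm_num) i v
    simpa using this.symm
  rw [h1, h2, ← diag_single h]
  exact (diag T).le_opNorm _

/-- Boundedness of a family of operators. -/
def Bd (T : ∀ i, H i →L[ℂ] H i) : Prop := ∃ M : ℝ, 0 ≤ M ∧ ∀ i, ‖T i‖ ≤ M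

lemma Bd.add {T S : ∀ i, H i →L[ℂ] H i} (hT : Bd T) (hS : Bd S) :
    Bd (fun i => T i + S i) := by
  obtain ⟨M, hM0, hM⟩ := hT; obtain ⟨N, hN0, hN⟩ := hS
  exact ⟨M + N, by linarith, fun i => le_trans (norm_add_le _ _) (add_le_add (hM i) (hN i))⟩

lemma Bd.sub {T S : ∀ i, H i →L[ℂ] H i} (hT : Bd T) (hS : Bd S) :
    Bd (fun i => T i - S i) := by
  obtain ⟨M, hM0, hM⟩ := hT; obtain ⟨N, hN0, hN⟩ := hS
  exact ⟨M + N, by linarith, fun i => le_trans (norm_sub_le _ _) (add_le_add (hM i) (hN i))⟩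

lemma Bd.smul {T : ∀ i, H i →L[ℂ] H i} (hT : Bd T) (c : ℂ) :
    Bd (fun i => c • T i) := by
  obtain ⟨M, hM0, hM⟩ := hT
  exact ⟨‖c‖ * M, by positivity, fun i => by
    rw [norm_smul]; exact mul_le_mul_of_nonneg_left (hM i) (norm_nonneg c)⟩

lemma Bd.mul {T S : ∀ i, H i →L[ℂ] H i} (hT : Bd T) (hS : Bd S) :
    Bd (fun i => T i * S i) := by
  obtain ⟨M, hM0, hM⟩ := hT; obtain ⟨N, hN0, hN⟩ := hS
  exact ⟨M * N, by positivity, fun i => le_trans (norm_mul_le _ _)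
    (mul_le_mul (hM i) (hN i) (norm_nonneg _) hM0)⟩

lemma Bd.one : Bd (fun i => (1 : H i →L[ℂ] H i)) :=
  ⟨1, zero_le_one, fun _ => ContinuousLinearMap.norm_id_le⟩

lemma diag_add {T S : ∀ i, H i →L[ℂ] H i} (hT : Bd T) (hS : Bd S) :
    diag (fun i => T i + S i) = diag T + diag S := by
  ext x i
  rw [ContinuousLinearMap.add_apply, diag_apply (hT.add hS), lp.coeFn_add, Pi.add_apply,
    diag_apply hT, diag_apply hS]
  rfl

lemma diag_sub {T S : ∀ i, H i →L[ℂ] H i} (hT : Bd T) (hS : Bd S) :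
    diag (fun i => T i - S i) = diag T - diag S := by
  ext x i
  rw [ContinuousLinearMap.sub_apply, diag_apply (hT.sub hS), lp.coeFn_sub, Pi.sub_apply,
    diag_apply hT, diag_apply hS]
  rfl

lemma diag_smul {T : ∀ i, H i →L[ℂ] H i} (hT : Bd T) (c : ℂ) :
    diag (fun i => c • T i) = c • diag T := by
  ext x i
  rw [ContinuousLinearMap.smul_apply, diag_apply (hT.smul c), lp.coeFn_smul, Pi.smul_apply,
    diag_apply hT]
  rfl

lemma diag_mul {T S : ∀ i, H i →L[ℂ] H i} (hT : Bd T) (hS : Bd S) :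
    diag (fun i => T i * S i) = diag T * diag S := by
  ext x i
  rw [ContinuousLinearMap.mul_apply, diag_apply (hT.mul hS), diag_apply hT, diag_apply hS]
  rfl

lemma diag_one : diag (fun i => (1 : H i →L[ℂ] H i)) = 1 := by
  ext x i
  rw [diag_apply Bd.one]
  rfl

lemma isSelfAdjoint_diag {T : ∀ i, H i →L[ℂ] H i} (hT : Bd T)
    (hsa : ∀ i, IsSelfAdjoint (T i)) : IsSelfAdjoint (diag T) := by
  rw [ContinuousLinearMap.isSelfAdjoint_iff_isSymmetric]
  intro x y
  simp only [ContinuousLinearMap.coe_coe]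
  rw [lp.inner_eq_tsum, lp.inner_eq_tsum]
  refine tsum_congr (fun i => ?_)
  rw [diag_apply hT, diag_apply hT]
  exact ((ContinuousLinearMap.isSelfAdjoint_iff_isSymmetric).mp (hsa i)) (x i) (y i)

lemma norm_aeval_le {A : Type*} [NormedRing A] [NormedAlgebra ℂ A]
    (x : A) (h1 : ‖(1 : A)‖ ≤ 1) {M : ℝ} (hx : ‖x‖ ≤ M) (p : Polynomial ℂ) :
    ‖Polynomial.aeval x p‖ ≤ ∑ i ∈ Finset.range (p.natDegree + 1), ‖p.coeff i‖ * M ^ i := by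
  have h0 : (0:ℝ) ≤ M := le_trans (norm_nonneg x) hx
  rw [Polynomial.aeval_eq_sum_range]
  refine le_trans (norm_sum_le _ _) (Finset.sum_le_sum (fun i _ => ?_))
  rw [norm_smul]
  refine mul_le_mul_of_nonneg_left ?_ (norm_nonneg _)
  rcases Nat.eq_zero_or_pos i with rfl | hi
  · simpa using h1
  calc ‖x ^ i‖ ≤ ‖x‖ ^ i := norm_pow_le' x hi
    _ ≤ M ^ i := pow_le_pow_left₀ (norm_nonneg x) hx i

lemma Bd.aeval {T : ∀ i, H i →L[ℂ] H i} (hT : Bd T) (p : Polynomial ℂ) :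
    Bd (fun i => Polynomial.aeval (T i) p) := by
  obtain ⟨M, hM0, hM⟩ := hT
  refine ⟨∑ i ∈ Finset.range (p.natDegree + 1), ‖p.coeff i‖ * M ^ i, ?_, fun i =>
    norm_aeval_le (T i) ContinuousLinearMap.norm_id_le (hM i) p⟩
  exact Finset.sum_nonneg (fun i _ => by positivity)

lemma aeval_diag {T : ∀ i, H i →L[ℂ] H i} (hT : Bd T) (p : Polynomial ℂ) :
    Polynomial.aeval (diag T) p = diag (fun i => Polynomial.aeval (T i) p) := by
  induction p using Polynomial.induction_on with
  | C r =>
    simp only [Polynomial.aeval_C]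
    have hfam : (fun i => algebraMap ℂ (H i →L[ℂ] H i) r)
        = fun i => r • (1 : H i →L[ℂ] H i) :=
      funext fun i => Algebra.algebraMap_eq_smul_one r
    rw [Algebra.algebraMap_eq_smul_one, hfam, diag_smul Bd.one, diag_one]
  | add p q hp hq =>
    simp only [map_add]
    rw [hp, hq, ← diag_add (hT.aeval p) (hT.aeval q)]
  | monomial n r hn =>
    have key : (Polynomial.C r * Polynomial.X ^ (n + 1) : Polynomial ℂ)
        = (Polynomial.C r * Polynomial.X ^ n) * Polynomial.X := by ring
    have hfam : (fun i => Polynomial.aeval (T i)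
          (Polynomial.C r * Polynomial.X ^ n * Polynomial.X))
        = fun i => Polynomial.aeval (T i) (Polynomial.C r * Polynomial.X ^ n) * T i :=
      funext fun i => by rw [map_mul, Polynomial.aeval_X]
    rw [key, map_mul, Polynomial.aeval_X, hn, hfam, diag_mul (hT.aeval _) hT]

end OpLip

namespace OpLip

variable {E : Type} [NormedAddCommGroup E] [InnerProductSpace ℂ E] [CompleteSpace E]
  [Nontrivial E]

lemma spectrum_re {A : E →L[ℂ] E} (hA : IsSelfAdjoint A) {M : ℝ} (hAM : ‖A‖ ≤ M)
    {z : ℂ} (hz : z ∈ spectrum ℂ A) : z = (z.re : ℂ) ∧ z.re ∈ Set.Icc (-M) M := by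
  refine ⟨hA.mem_spectrum_eq_re hz, ?_⟩
  have h1 : ‖z‖ ≤ ‖A‖ := spectrum.norm_le_norm_of_mem hz
  have h2 : |z.re| ≤ ‖z‖ := Complex.abs_re_le_norm z
  rw [Set.mem_Icc]
  constructor <;> [linarith [neg_abs_le z.re]; linarith [le_abs_self z.re]]

/-- Approximation of the cfc by a polynomial, with error controlled on `[-M, M]`. -/
lemma norm_cfc_sub_aeval (f : ℝ → ℂ) {M ε : ℝ} (hε : 0 ≤ ε)
    (P : Polynomial ℂ)
    (hP : ∀ x : ℝ, x ∈ Set.Icc (-M) M → ‖f x - P.eval (x : ℂ)‖ ≤ ε)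
    (A : E →L[ℂ] E) (hA : IsSelfAdjoint A) (hAM : ‖A‖ ≤ M)
    (hf : Continuous f) :
    ‖cfc (fun z : ℂ => f z.re) A - Polynomial.aeval A P‖ ≤ ε := by
  have hsn : IsStarNormal A := hA.isStarNormal
  rw [← cfc_polynomial P A, ← cfc_sub (fun z : ℂ => f z.re) (fun z => P.eval z) A]
  refine norm_cfc_le hε (fun z hz => ?_)
  obtain ⟨hz1, hz2⟩ := spectrum_re hA hAM hz
  have := hP z.re hz2
  rw [← hz1] at this
  exact this

/-- Existence of a good polynomial approximation of `f` on `[-M, M]`. -/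
lemma exists_poly (f : ℝ → ℂ) (hf : Continuous f) (M : ℝ) {ε : ℝ} (hε : 0 < ε) :
    ∃ P : Polynomial ℂ, ∀ x ∈ Set.Icc (-M) M, ‖f x - P.eval (x : ℂ)‖ ≤ ε := by
  obtain ⟨p, hp⟩ := exists_polynomial_near_of_continuousOn (-M) M (fun t => (f t).re)
    ((Complex.continuous_re.comp hf).continuousOn) (ε / 2) (by positivity)
  obtain ⟨q, hq⟩ := exists_polynomial_near_of_continuousOn (-M) M (fun t => (f t).im)
    ((Complex.continuous_im.comp hf).continuousOn) (ε / 2) (by positivity)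
  refine ⟨p.map (algebraMap ℝ ℂ) + Polynomial.C Complex.I * q.map (algebraMap ℝ ℂ),
    fun x hx => ?_⟩
  have e1 : Polynomial.eval (x : ℂ) (p.map (algebraMap ℝ ℂ)) = ((p.eval x : ℝ) : ℂ) := by
    rw [Polynomial.eval_map, show ((x : ℂ)) = algebraMap ℝ ℂ x from rfl,
      Polynomial.eval₂_at_apply]
    simp
  have e2 : Polynomial.eval (x : ℂ) (q.map (algebraMap ℝ ℂ)) = ((q.eval x : ℝ) : ℂ) := by
    rw [Polynomial.eval_map, show ((x : ℂ)) = algebraMap ℝ ℂ x from rfl,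
      Polynomial.eval₂_at_apply]
    simp
  rw [Polynomial.eval_add, Polynomial.eval_mul, Polynomial.eval_C, e1, e2]
  have key : ∀ (w : ℂ) (c d : ℝ), ‖w - ((c : ℂ) + Complex.I * (d : ℂ))‖
      ≤ |w.re - c| + |w.im - d| := by
    intro w c d
    have hw : w - ((c : ℂ) + Complex.I * (d : ℂ))
        = ((w.re - c : ℝ) : ℂ) + Complex.I * ((w.im - d : ℝ) : ℂ) := by
      apply Complex.ext <;> simp
    rw [hw]
    refine le_trans (norm_add_le _ _) ?_
    rw [norm_mul, Complex.norm_I, one_mul, Complex.norm_real, Complex.norm_real,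
      Real.norm_eq_abs, Real.norm_eq_abs]
  refine le_trans (key (f x) (p.eval x) (q.eval x)) ?_
  have h1 := hp x hx
  have h2 := hq x hx
  rw [abs_sub_comm] at h1 h2
  linarith

/-- A uniform bound on `‖cfc f A‖` for selfadjoint `A` with `‖A‖ ≤ M`. -/
lemma norm_cfc_le_bound (f : ℝ → ℂ) {M c : ℝ} (hc : 0 ≤ c)
    (hfc : ∀ x ∈ Set.Icc (-M) M, ‖f x‖ ≤ c)
    (A : E →L[ℂ] E) (hA : IsSelfAdjoint A) (hAM : ‖A‖ ≤ M) (hf : Continuous f) :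
    ‖cfc (fun z : ℂ => f z.re) A‖ ≤ c := by
  have hsn : IsStarNormal A := hA.isStarNormal
  refine norm_cfc_le hc (fun z hz => ?_)
  exact hfc z.re (spectrum_re hA hAM hz).2

end OpLip

namespace OpLip

variable {ι : Type} {H : ι → Type} [∀ i, NormedAddCommGroup (H i)]
  [∀ i, InnerProductSpace ℂ (H i)] [∀ i, CompleteSpace (H i)]

lemma lp_nontrivial [Nonempty ι] [∀ i, Nontrivial (H i)] : Nontrivial (lp H 2) := by
  have i : ι := Classical.arbitrary ι
  obtain ⟨x, hx⟩ := exists_ne (0 : H i)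
  refine ⟨lp.single 2 i x, 0, fun h => hx ?_⟩
  have := congrArg (fun y : lp H 2 => (y : ∀ j, H j) i) h
  simpa [lp.single_apply_self] using this

/-- The cfc of a block-diagonal operator is block-diagonal. -/
lemma cfc_diag (f : ℝ → ℂ) (hf : Continuous f) [Nonempty ι] [∀ i, Nontrivial (H i)]
    {T : ∀ i, H i →L[ℂ] H i} {M : ℝ} (hM0 : 0 ≤ M) (hM : ∀ i, ‖T i‖ ≤ M)
    (hsa : ∀ i, IsSelfAdjoint (T i)) :
    cfc (fun z : ℂ => f z.re) (diag T)
      = diag (fun i => cfc (fun z : ℂ => f z.re) (T i)) := by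
  haveI : Nontrivial (lp H 2) := lp_nontrivial
  have hBd : Bd T := ⟨M, hM0, hM⟩
  obtain ⟨c0, hc0⟩ := (isCompact_Icc (a := -M) (b := M)).exists_bound_of_continuousOn
    hf.continuousOn
  have hc : ∀ x ∈ Set.Icc (-M) M, ‖f x‖ ≤ max c0 0 :=
    fun x hx => le_trans (hc0 x hx) (le_max_left _ _)
  have hcfcBd : Bd (fun i => cfc (fun z : ℂ => f z.re) (T i)) :=
    ⟨max c0 0, le_max_right _ _, fun i =>
      norm_cfc_le_bound f (le_max_right _ _) hc (T i) (hsa i) (hM i) hf⟩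
  have hdsa : IsSelfAdjoint (diag T) := isSelfAdjoint_diag hBd hsa
  have hdM : ‖diag T‖ ≤ M := norm_diag_le hM0 hM
  rw [← sub_eq_zero, ← norm_le_zero_iff]
  refine le_of_forall_pos_le_add (fun ε hε => ?_)
  rw [zero_add]
  obtain ⟨P, hP⟩ := exists_poly f hf M (half_pos hε)
  have h1 : ‖cfc (fun z : ℂ => f z.re) (diag T) - Polynomial.aeval (diag T) P‖ ≤ ε / 2 :=
    norm_cfc_sub_aeval f (half_pos hε).le P hP (diag T) hdsa hdM hf
  have h2 : ∀ i, ‖Polynomial.aeval (T i) P - cfc (fun z : ℂ => f z.re) (T i)‖ ≤ ε / 2 :=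
    fun i => by
      rw [norm_sub_rev]
      exact norm_cfc_sub_aeval f (half_pos hε).le P hP (T i) (hsa i) (hM i) hf
  have h3 : Polynomial.aeval (diag T) P = diag (fun i => Polynomial.aeval (T i) P) :=
    aeval_diag hBd P
  have h4 : ‖diag (fun i => Polynomial.aeval (T i) P
      - cfc (fun z : ℂ => f z.re) (T i))‖ ≤ ε / 2 :=
    norm_diag_le (half_pos hε).le (fun i => h2 i)
  calc ‖cfc (fun z : ℂ => f z.re) (diag T)
        - diag (fun i => cfc (fun z : ℂ => f z.re) (T i))‖
      = ‖(cfc (fun z : ℂ => f z.re) (diag T) - Polynomial.aeval (diag T) P)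
        + (Polynomial.aeval (diag T) P
          - diag (fun i => cfc (fun z : ℂ => f z.re) (T i)))‖ := by
        rw [sub_add_sub_cancel]
    _ ≤ ‖cfc (fun z : ℂ => f z.re) (diag T) - Polynomial.aeval (diag T) P‖
        + ‖Polynomial.aeval (diag T) P
          - diag (fun i => cfc (fun z : ℂ => f z.re) (T i))‖ := norm_add_le _ _
    _ ≤ ε / 2 + ε / 2 := by
        refine add_le_add h1 ?_
        rw [h3, ← diag_sub (hBd.aeval P) hcfcBd]
        exact h4
    _ = ε := by ring

end OpLip

namespace OpLip

/-- Chaining local Lipschitz estimates at a dense set of anchor points. -/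
lemma chain {E : Type*} [NormedAddCommGroup E] (g : ℝ → E) (D : Set ℝ) {s C δ : ℝ}
    (hs : 0 < s) (hC : 0 ≤ C) (hδ : 0 < δ) (h0D : (0:ℝ) ∈ D) (hsD : s ∈ D)
    (hdense : ∀ x y : ℝ, 0 ≤ x → x < y → y ≤ s → ∃ d ∈ D, x < d ∧ d < y)
    (hest : ∀ u ∈ D, ∀ t : ℝ, |t| < δ → ‖g (u + t) - g u‖ ≤ C * |t|) :
    ‖g s - g 0‖ ≤ C * s := by
  -- choose the number of steps
  obtain ⟨k, hk1, hk⟩ : ∃ k : ℕ, 1 ≤ k ∧ s / k < δ / 2 := by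
    refine ⟨⌈2 * s / δ⌉₊ + 1, Nat.le_add_left _ _, ?_⟩
    have h1 : 2 * s / δ < (⌈2 * s / δ⌉₊ + 1 : ℕ) := by
      push_cast
      exact lt_of_le_of_lt (Nat.le_ceil _) (by linarith [Nat.lt_succ_self ⌈2 * s / δ⌉₊])
    have hk0 : (0:ℝ) < (⌈2 * s / δ⌉₊ + 1 : ℕ) := by positivity
    rw [div_lt_div_iff₀ hk0 (by norm_num : (0:ℝ) < 2)]
    rw [div_lt_iff₀ hδ] at h1
    linarith
  set step := s / k with hstep_def
  have hk0 : (0:ℝ) < k := by exact_mod_cast hk1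
  have hstep : 0 < step := div_pos hs hk0
  have hks : (k : ℝ) * step = s := by rw [hstep_def]; field_simp
  -- choose intermediate anchor points
  have hw : ∀ i : ℕ, ∃ d : ℝ, (1 ≤ i ∧ i ≤ k - 1) →
      (d ∈ D ∧ (i : ℝ) * step < d ∧ d < (i : ℝ) * step + step / 2) := by
    intro i
    by_cases hi : 1 ≤ i ∧ i ≤ k - 1
    · have hik : (i : ℝ) ≤ (k : ℝ) - 1 := by
        have h1 : i ≤ k - 1 := hi.2
        have h2 : (i : ℝ) ≤ ((k - 1 : ℕ) : ℝ) := by exact_mod_cast h1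
        rw [Nat.cast_sub hk1] at h2
        simpa using h2
      obtain ⟨d, hd, hd1, hd2⟩ := hdense ((i : ℝ) * step) ((i : ℝ) * step + step / 2)
        (by positivity) (by linarith) (by nlinarith)
      exact ⟨d, fun _ => ⟨hd, hd1, hd2⟩⟩
    · exact ⟨0, fun h => absurd h hi⟩
  choose w hwspec using hw
  obtain ⟨u, hu0, hukk, huw⟩ : ∃ u : ℕ → ℝ, u 0 = 0 ∧ (∀ i, k ≤ i → u i = s)
      ∧ (∀ i, 1 ≤ i → i < k → u i = w i) :=
    ⟨fun i => if i = 0 then 0 else if k ≤ i then s else w i, by simp,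
      fun i hi => by simp only [if_neg (show ¬ i = 0 by omega), if_pos hi],
      fun i h1 h2 => by
        simp only [if_neg (show ¬ i = 0 by omega), if_neg (show ¬ k ≤ i by omega)]⟩
  have huk : u k = s := hukk k le_rfl
  have humem : ∀ i, i ≤ k → u i ∈ D := by
    intro i hi
    rcases Nat.eq_zero_or_pos i with rfl | hipos
    · rwa [hu0]
    rcases eq_or_lt_of_le hi with rfl | hik
    · rwa [huk]
    · rw [huw i hipos hik]
      exact (hwspec i ⟨hipos, by omega⟩).1
  have hwl : ∀ j, 1 ≤ j → j < k → ((j:ℝ) * step < w j ∧ w j < (j:ℝ) * step + step / 2) :=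
    fun j h1 h2 => (hwspec j ⟨h1, by omega⟩).2
  have hmono : ∀ i, i < k → u i ≤ u (i + 1) ∧ u (i + 1) - u i < δ := by
    intro i hik
    rcases Nat.eq_zero_or_pos i with rfl | hipos
    · rw [hu0]
      rcases eq_or_lt_of_le (show 1 ≤ k from hk1) with hk1' | hk2
      · have hu1 : u (0 + 1) = s := hukk 1 hk1'.ge
        have hsδ : s < δ := by
          have h2 : ((1:ℕ) : ℝ) * step = s := by rw [hk1']; exact hks
          push_cast at h2
          linarith
        rw [hu1]
        constructor <;> linarith
      · have hu1 : u (0 + 1) = w 1 := huw 1 le_rfl hk2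
        obtain ⟨hl, hr⟩ := hwl 1 le_rfl hk2
        rw [hu1]
        push_cast at hl hr
        constructor <;> linarith
    · have hui : u i = w i := huw i hipos hik
      obtain ⟨hl, hr⟩ := hwl i hipos hik
      rcases eq_or_lt_of_le (show i + 1 ≤ k from hik) with hik1 | hik2
      · have hu1 : u (i + 1) = s := hukk (i + 1) hik1.ge
        have hi1 : (i : ℝ) = (k : ℝ) - 1 := by
          have h2 : ((i + 1 : ℕ) : ℝ) = (k : ℝ) := by exact_mod_cast congrArg Nat.cast hik1
          push_cast at h2
          linarith
        rw [hu1, hui]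
        constructor <;> nlinarith
      · have hu1 : u (i + 1) = w (i + 1) := huw (i + 1) (by omega) hik2
        obtain ⟨hl1, hr1⟩ := hwl (i + 1) (by omega) hik2
        rw [hui, hu1]
        push_cast at hl1 hr1
        constructor <;> nlinarith
  -- the induction
  have main : ∀ i, i ≤ k → ‖g (u i) - g 0‖ ≤ C * u i := by
    intro i
    induction i with
    | zero => intro _; rw [hu0]; simp
    | succ i ih =>
      intro hik
      have hik' : i < k := by omega
      obtain ⟨hle, hlt⟩ := hmono i hik'
      have hest2 := hest (u i) (humem i (by omega)) (u (i + 1) - u i)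
        (by rw [abs_of_nonneg (by linarith)]; linarith)
      rw [abs_of_nonneg (by linarith : (0:ℝ) ≤ u (i + 1) - u i),
        (by ring : u i + (u (i + 1) - u i) = u (i + 1))] at hest2
      calc ‖g (u (i + 1)) - g 0‖
          ≤ ‖g (u (i + 1)) - g (u i)‖ + ‖g (u i) - g 0‖ := by
            have h := norm_add_le (g (u (i + 1)) - g (u i)) (g (u i) - g 0)
            simpa using h
        _ ≤ C * (u (i + 1) - u i) + C * u i := add_le_add hest2 (ih (by omega))
        _ = C * u (i + 1) := by ring
  have hfin := main k le_rfl
  rwa [huk] at hfin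

end OpLip

namespace OpLip

/-- A packaged counterexample to operator Lipschitzness with constant `c`. -/
structure Cex (f : ℝ → ℂ) (a c : ℝ) : Type 1 where
  E : Type
  [grp : NormedAddCommGroup E]
  [ips : InnerProductSpace ℂ E]
  [cs : CompleteSpace E]
  A : E →L[ℂ] E
  B : E →L[ℂ] E
  hA : IsSelfAdjoint A
  hB : IsSelfAdjoint B
  hAa : ‖A‖ ≤ a
  hBa : ‖B‖ ≤ a
  hgt : c * ‖A - B‖ < ‖cfc (fun z : ℂ => f z.re) A - cfc (fun z : ℂ => f z.re) B‖

end OpLip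

namespace OpLip

lemma ofReal_selfAdjoint (r : ℝ) : IsSelfAdjoint ((r : ℂ)) := by
  simp [IsSelfAdjoint, Complex.star_def, Complex.conj_ofReal]

end OpLip

set_option maxHeartbeats 2000000 in
set_option synthInstance.maxHeartbeats 400000 in
open OpLip in
/-- Pointwise boundedness of difference quotients implies local operator
Lipschitzness: let `f : ℝ → ℂ` be continuous. If for every complex Hilbert
space `H` and all bounded self-adjoint operators `A`, `K` on `H` there exist
`C ≥ 0` and `δ > 0` such that `‖f(A + tK) - f(A)‖ ≤ C * |t|` for `|t| < δ`,
then for every `a > 0` there exists `C ≥ 0` such that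
`‖f(A) - f(B)‖ ≤ C * ‖A - B‖` for all bounded self-adjoint `A`, `B` with
`‖A‖ ≤ a` and `‖B‖ ≤ a`. -/
theorem stmt_15 (f : ℝ → ℂ) (hf : Continuous f)
    (hyp : ∀ (H : Type) [NormedAddCommGroup H] [InnerProductSpace ℂ H] [CompleteSpace H]
      (A K : H →L[ℂ] H), IsSelfAdjoint A → IsSelfAdjoint K →
      ∃ C : ℝ, 0 ≤ C ∧ ∃ δ : ℝ, 0 < δ ∧ ∀ t : ℝ, |t| < δ →
        ‖cfc (fun z : ℂ => f z.re) (A + (t : ℂ) • K) -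
            cfc (fun z : ℂ => f z.re) A‖ ≤ C * |t|) :
    ∀ a : ℝ, 0 < a → ∃ C : ℝ, 0 ≤ C ∧
      ∀ (H : Type) [NormedAddCommGroup H] [InnerProductSpace ℂ H] [CompleteSpace H]
        (A B : H →L[ℂ] H), IsSelfAdjoint A → IsSelfAdjoint B → ‖A‖ ≤ a → ‖B‖ ≤ a →
        ‖cfc (fun z : ℂ => f z.re) A - cfc (fun z : ℂ => f z.re) B‖ ≤ C * ‖A - B‖ := by
  intro a ha
  by_contra hcon
  push_neg at hcon
  -- package counterexamples
  have key : ∀ n : ℕ, Nonempty (Cex f a n) := by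
    intro n
    obtain ⟨E, i1, i2, i3, A, B, h1, h2, h3, h4, h5⟩ := hcon n (Nat.cast_nonneg n)
    letI := i1; letI := i2; letI := i3
    exact ⟨⟨E, A, B, h1, h2, h3, h4, h5⟩⟩
  let W : ∀ n : ℕ, Cex f a n := fun n => (key n).some
  letI iG0 : ∀ n : ℕ, NormedAddCommGroup ((W n).E) := fun n => (W n).grp
  letI iI0 : ∀ n : ℕ, InnerProductSpace ℂ ((W n).E) := fun n => (W n).ips
  letI iC0 : ∀ n : ℕ, CompleteSpace ((W n).E) := fun n => (W n).cs
  letI iG : ∀ j : ℕ × ℕ, NormedAddCommGroup ((W j.1).E) := fun j => iG0 j.1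
  letI iI : ∀ j : ℕ × ℕ, InnerProductSpace ℂ ((W j.1).E) := fun j => iI0 j.1
  letI iC : ∀ j : ℕ × ℕ, CompleteSpace ((W j.1).E) := fun j => iC0 j.1
  letI iN : ∀ j : ℕ × ℕ, Nontrivial ((W j.1).E) := by
    intro j
    by_contra hnt
    rw [not_nontrivial_iff_subsingleton] at hnt
    haveI : Subsingleton ((W j.1).E →L[ℂ] (W j.1).E) :=
      ⟨fun T S => ContinuousLinearMap.ext fun x => hnt.elim _ _⟩
    have h0 := (W j.1).hgt
    rw [Subsingleton.elim (cfc (fun z : ℂ => f z.re) (W j.1).A)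
      (cfc (fun z : ℂ => f z.re) (W j.1).B), sub_self, norm_zero] at h0
    have h1 : (0:ℝ) ≤ (j.1 : ℝ) * ‖(W j.1).A - (W j.1).B‖ := by positivity
    linarith
  -- basic data
  set s : ℕ → ℝ := fun n => ‖(W n).A - (W n).B‖ with hs_def
  have hs : ∀ n, 0 < s n := by
    intro n
    rcases (norm_nonneg ((W n).A - (W n).B)).lt_or_eq with h | h
    · exact h
    · exfalso
      have hAB : (W n).A = (W n).B := by
        rw [eq_comm, norm_eq_zero, sub_eq_zero] at h
        exact h
      have h0 := (W n).hgt
      rw [hAB] at h0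
      simp at h0
  have hs2a : ∀ n, s n ≤ 2 * a := by
    intro n
    calc s n ≤ ‖(W n).A‖ + ‖(W n).B‖ := norm_sub_le _ _
      _ ≤ 2 * a := by linarith [(W n).hAa, (W n).hBa]
  set K : ∀ n : ℕ, (W n).E →L[ℂ] (W n).E :=
    fun n => (((s n)⁻¹ : ℝ) : ℂ) • ((W n).B - (W n).A) with hK_def
  have hKsa : ∀ n, IsSelfAdjoint (K n) :=
    fun n => (ofReal_selfAdjoint _).smul ((W n).hB.sub (W n).hA)
  have hK1 : ∀ n, ‖K n‖ ≤ 1 := by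
    intro n
    rw [hK_def]
    simp only []
    rw [norm_smul, Complex.norm_real, Real.norm_eq_abs,
      abs_of_nonneg (inv_nonneg.2 (hs n).le), norm_sub_rev]
    exact le_of_eq (inv_mul_cancel₀ (hs n).ne')
  have path : ∀ n, (W n).A + ((s n : ℝ) : ℂ) • K n = (W n).B := by
    intro n
    rw [hK_def]
    simp only []
    rw [smul_smul, ← Complex.ofReal_mul, mul_inv_cancel₀ (hs n).ne',
      Complex.ofReal_one, one_smul]
    abel
  -- dense anchor points
  let e : ℕ ≃ ℚ := (Denumerable.eqv ℚ).symm
  set t₀ : ℕ × ℕ → ℝ := fun j => max 0 (min ((e j.2 : ℚ) : ℝ) (s j.1)) with ht₀_def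
  have ht₀0 : ∀ j, 0 ≤ t₀ j := fun j => le_max_left _ _
  have ht₀s : ∀ j, t₀ j ≤ s j.1 := fun j => max_le (hs _).le (min_le_right _ _)
  -- the two diagonal families
  set Tfam : ∀ j : ℕ × ℕ, (W j.1).E →L[ℂ] (W j.1).E :=
    fun j => (W j.1).A + ((t₀ j : ℝ) : ℂ) • K j.1 with hTfam_def
  set Kfam : ∀ j : ℕ × ℕ, (W j.1).E →L[ℂ] (W j.1).E := fun j => K j.1 with hKfam_def
  have hTsa : ∀ j, IsSelfAdjoint (Tfam j) :=
    fun j => (W j.1).hA.add ((ofReal_selfAdjoint _).smul (hKsa j.1))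
  have hTbd : ∀ j, ‖Tfam j‖ ≤ 3 * a := by
    intro j
    calc ‖Tfam j‖ ≤ ‖(W j.1).A‖ + ‖((t₀ j : ℝ) : ℂ) • K j.1‖ := norm_add_le _ _
      _ ≤ a + 2 * a := by
          refine add_le_add (W j.1).hAa ?_
          rw [norm_smul, Complex.norm_real, Real.norm_eq_abs, abs_of_nonneg (ht₀0 j)]
          calc t₀ j * ‖K j.1‖ ≤ (2 * a) * 1 :=
                mul_le_mul ((ht₀s j).trans (hs2a _)) (hK1 _) (norm_nonneg _) (by linarith)
            _ = 2 * a := by ring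
      _ = 3 * a := by ring
  have hTBd : Bd Tfam := ⟨3 * a, by linarith, hTbd⟩
  have hKBd : Bd Kfam := ⟨1, zero_le_one, fun j => hK1 j.1⟩
  -- apply the hypothesis to the big diagonal operators
  obtain ⟨C, hC0, δ, hδ, hbound⟩ := hyp (lp (fun j : ℕ × ℕ => (W j.1).E) 2)
    (diag Tfam) (diag Kfam) (isSelfAdjoint_diag hTBd hTsa)
    (isSelfAdjoint_diag hKBd (fun j => hKsa j.1))
  -- uniform bound for f on the relevant interval
  obtain ⟨c0, hc0⟩ := (isCompact_Icc (a := -(3*a+δ)) (b := (3*a+δ))).exists_bound_of_continuousOn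
    hf.continuousOn
  have hfc : ∀ x ∈ Set.Icc (-(3*a+δ)) (3*a+δ), ‖f x‖ ≤ max c0 0 :=
    fun x hx => le_trans (hc0 x hx) (le_max_left _ _)
  -- block estimate
  have block : ∀ (n m : ℕ) (t : ℝ), |t| < δ →
      ‖cfc (fun z : ℂ => f z.re) ((W n).A + ((t₀ (n,m) + t : ℝ) : ℂ) • K n)
        - cfc (fun z : ℂ => f z.re) ((W n).A + ((t₀ (n,m) : ℝ) : ℂ) • K n)‖ ≤ C * |t| := by
    intro n m t ht
    have hS1sa : ∀ j, IsSelfAdjoint (Tfam j + (t : ℂ) • Kfam j) :=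
      fun j => (hTsa j).add ((ofReal_selfAdjoint t).smul (hKsa j.1))
    have hS1bd : ∀ j, ‖Tfam j + (t : ℂ) • Kfam j‖ ≤ 3*a + δ := by
      intro j
      calc ‖Tfam j + (t : ℂ) • Kfam j‖ ≤ ‖Tfam j‖ + ‖(t : ℂ) • Kfam j‖ := norm_add_le _ _
        _ ≤ 3 * a + δ := by
            refine add_le_add (hTbd j) ?_
            rw [norm_smul, Complex.norm_real, Real.norm_eq_abs]
            calc |t| * ‖Kfam j‖ ≤ δ * 1 :=
                  mul_le_mul ht.le (hK1 j.1) (norm_nonneg _) hδ.le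
              _ = δ := by ring
    have hTbd' : ∀ j, ‖Tfam j‖ ≤ 3*a + δ := fun j => (hTbd j).trans (by linarith)
    have h3aδ : (0:ℝ) ≤ 3*a + δ := by linarith
    have e1 : diag (fun j => Tfam j + (t : ℂ) • Kfam j) = diag Tfam + (t : ℂ) • diag Kfam := by
      rw [diag_add hTBd (hKBd.smul (t : ℂ)), diag_smul hKBd]
    have e2 : cfc (fun z : ℂ => f z.re) (diag (fun j => Tfam j + (t : ℂ) • Kfam j))
        = diag (fun j => cfc (fun z : ℂ => f z.re) (Tfam j + (t : ℂ) • Kfam j)) :=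
      cfc_diag f hf h3aδ hS1bd hS1sa
    have e3 : cfc (fun z : ℂ => f z.re) (diag Tfam)
        = diag (fun j => cfc (fun z : ℂ => f z.re) (Tfam j)) :=
      cfc_diag f hf h3aδ hTbd' hTsa
    have hc1Bd : Bd (fun j => cfc (fun z : ℂ => f z.re) (Tfam j + (t : ℂ) • Kfam j)) :=
      ⟨max c0 0, le_max_right _ _, fun j =>
        norm_cfc_le_bound f (le_max_right _ _) hfc _ (hS1sa j) (hS1bd j) hf⟩
    have hc2Bd : Bd (fun j => cfc (fun z : ℂ => f z.re) (Tfam j)) :=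
      ⟨max c0 0, le_max_right _ _, fun j =>
        norm_cfc_le_bound f (le_max_right _ _) hfc _ (hTsa j) (hTbd' j) hf⟩
    have h5 := hbound t ht
    rw [← e1, e2, e3, ← diag_sub hc1Bd hc2Bd] at h5
    have h6 := norm_le_norm_diag (T := fun j => cfc (fun z : ℂ => f z.re)
      (Tfam j + (t : ℂ) • Kfam j) - cfc (fun z : ℂ => f z.re) (Tfam j))
      (hc1Bd.sub hc2Bd) (n, m)
    refine le_trans (le_of_eq ?_) (le_trans h6 h5)
    have e0 : (W n).A + ((t₀ (n,m) + t : ℝ) : ℂ) • K n = Tfam (n,m) + (t : ℂ) • Kfam (n,m) := by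
      rw [hTfam_def, hKfam_def]
      simp only []
      rw [Complex.ofReal_add, add_smul, add_assoc]
    have e0' : (W n).A + ((t₀ (n,m) : ℝ) : ℂ) • K n = Tfam (n,m) := by
      rw [hTfam_def]
    rw [e0, e0']
  -- chaining per block row
  have rowest : ∀ n : ℕ, ‖cfc (fun z : ℂ => f z.re) ((W n).B)
      - cfc (fun z : ℂ => f z.re) ((W n).A)‖ ≤ C * s n := by
    intro n
    have h0D : (0:ℝ) ∈ Set.range (fun m => t₀ (n, m)) := by
      refine ⟨e.symm 0, ?_⟩
      rw [ht₀_def]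
      simp only []
      rw [Equiv.apply_symm_apply]
      rw [show (((0:ℚ):ℝ)) = (0:ℝ) by norm_num, min_eq_left (hs n).le, max_self]
    have hsD : s n ∈ Set.range (fun m => t₀ (n, m)) := by
      obtain ⟨q, hq⟩ := exists_rat_gt (s n)
      refine ⟨e.symm q, ?_⟩
      rw [ht₀_def]
      simp only []
      rw [Equiv.apply_symm_apply, min_eq_right hq.le, max_eq_right (hs n).le]
    have hdense : ∀ x y : ℝ, 0 ≤ x → x < y → y ≤ s n →
        ∃ d ∈ Set.range (fun m => t₀ (n, m)), x < d ∧ d < y := by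
      intro x y hx hxy hys
      obtain ⟨q, hq1, hq2⟩ := exists_rat_btwn hxy
      refine ⟨t₀ (n, e.symm q), ⟨e.symm q, rfl⟩, ?_, ?_⟩ <;> rw [ht₀_def] <;> simp only [] <;>
        rw [Equiv.apply_symm_apply, min_eq_left (le_of_lt (lt_of_lt_of_le hq2 hys)),
          max_eq_right (le_trans hx hq1.le)]
      · exact hq1
      · exact hq2
    have hest : ∀ u ∈ Set.range (fun m => t₀ (n, m)), ∀ t : ℝ, |t| < δ →
        ‖(fun v : ℝ => cfc (fun z : ℂ => f z.re) ((W n).A + ((v : ℝ) : ℂ) • K n)) (u + t)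
          - (fun v : ℝ => cfc (fun z : ℂ => f z.re) ((W n).A + ((v : ℝ) : ℂ) • K n)) u‖
          ≤ C * |t| := by
      rintro u ⟨m, rfl⟩ t ht
      exact block n m t ht
    have hchain := chain (fun v : ℝ => cfc (fun z : ℂ => f z.re) ((W n).A + ((v : ℝ) : ℂ) • K n))
      (Set.range (fun m => t₀ (n, m))) (hs n) hC0 hδ h0D hsD hdense hest
    rw [path n, Complex.ofReal_zero, zero_smul, add_zero] at hchain
    exact hchain
  -- final contradiction
  obtain ⟨n, hn⟩ := exists_nat_gt C
  have h1 := (W n).hgt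
  have h2 := rowest n
  rw [norm_sub_rev] at h2
  have h3 : (n : ℝ) * s n < C * s n := lt_of_lt_of_le h1 h2
  have h4 : (n : ℝ) < C := lt_of_mul_lt_mul_right h3 (hs n).le
  linarith
end
end

section
/- Schur multipliers arising from Hilbert-space factorizations: Let S and T be arbitrary (index) sets, let 𝓗 be a complex Hilbert space, and let {u_s}_{s∈S} and {v_t}_{t∈T} be families of vectors in 𝓗 with ‖u_s‖·‖v_t‖ ≤ 1 for all s ∈ S, t ∈ T. Let A be a bounded linear operator from ℓ²(T) to ℓ²(S), with matrix entries a(s,t) = ⟨A δ_t, δ_s⟩ where δ_t, δ_s are the standard basis vectors. Then there exists a bounded linear operator B from ℓ²(T) to ℓ²(S) with ‖B‖ ≤ ‖A‖ whose matrix entries are ⟨B δ_t, δ_s⟩ = ⟨u_s, v_t⟩·a(s,t) for all s ∈ S, t ∈ T; in other words, the matrix Φ(s,t) = ⟨u_s, v_t⟩ is a Schur multiplier of norm at most 1. -/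
set_option maxHeartbeats 2000000


open scoped InnerProductSpace ComplexConjugate ENNReal

noncomputable section SchurAux

namespace SchurAux

variable {α : Type*}

private lemma l2_hasSum_sq (f : lp (fun _ : α => ℂ) 2) :
    HasSum (fun a => ‖f a‖ ^ 2) (‖f‖ ^ 2) := by
  have h := lp.hasSum_norm (p := 2) (by norm_num) f
  have h2 : ((2 : ℝ≥0∞).toReal) = (2 : ℝ) := by norm_num
  rw [h2] at h
  have e1 : ∀ x : ℝ, x ^ (2 : ℝ) = x ^ 2 := fun x => by
    rw [show (2 : ℝ) = ((2 : ℕ) : ℝ) by norm_num, Real.rpow_natCast]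
  simpa [e1] using h

private lemma l2_summable_sq (f : lp (fun _ : α => ℂ) 2) :
    Summable fun a => ‖f a‖ ^ 2 :=
  (l2_hasSum_sq f).summable

private lemma memℓp_mul (c : α → ℂ) (hc : ∀ a, ‖c a‖ ≤ 1)
    (y : lp (fun _ : α => ℂ) 2) : Memℓp (fun a => c a * (y : ∀ _ : α, ℂ) a) 2 := by
  apply memℓp_gen
  have h2 : ((2 : ℝ≥0∞).toReal) = (2 : ℝ) := by norm_num
  rw [h2]
  have hsum := l2_summable_sq y
  have : Summable fun a => ‖c a * y a‖ ^ 2 := by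
    refine hsum.of_nonneg_of_le (fun a => by positivity) (fun a => ?_)
    have : ‖c a * y a‖ ≤ ‖y a‖ := by
      rw [norm_mul]
      calc ‖c a‖ * ‖y a‖ ≤ 1 * ‖y a‖ :=
            mul_le_mul_of_nonneg_right (hc a) (norm_nonneg _)
        _ = ‖y a‖ := one_mul _
    exact pow_le_pow_left₀ (norm_nonneg _) this 2
  have e1 : ∀ x : ℝ, x ^ (2 : ℝ) = x ^ 2 := fun x => by
    rw [show (2 : ℝ) = ((2 : ℕ) : ℝ) by norm_num, Real.rpow_natCast]
  simpa [e1] using this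

/-- Pointwise multiplication of an `ℓ²` element by a bounded family. -/
private def mulVec (c : α → ℂ) (hc : ∀ a, ‖c a‖ ≤ 1)
    (y : lp (fun _ : α => ℂ) 2) : lp (fun _ : α => ℂ) 2 :=
  ⟨fun a => c a * y a, memℓp_mul c hc y⟩

@[simp] private lemma mulVec_apply (c : α → ℂ) (hc : ∀ a, ‖c a‖ ≤ 1)
    (y : lp (fun _ : α => ℂ) 2) (a : α) : (mulVec c hc y) a = c a * y a := rfl

private lemma mulVec_add (c : α → ℂ) (hc : ∀ a, ‖c a‖ ≤ 1)
    (y y' : lp (fun _ : α => ℂ) 2) :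
    mulVec c hc (y + y') = mulVec c hc y + mulVec c hc y' := by
  apply lp.ext
  funext a
  simp [mulVec, lp.coeFn_add, mul_add]
  rfl

private lemma mulVec_smul (c : α → ℂ) (hc : ∀ a, ‖c a‖ ≤ 1)
    (k : ℂ) (y : lp (fun _ : α => ℂ) 2) :
    mulVec c hc (k • y) = k • mulVec c hc y := by
  apply lp.ext
  funext a
  simp [mulVec, lp.coeFn_smul, Pi.smul_apply, smul_eq_mul]
  ring

/-- Partial sums of squared norms of the "rows" are bounded. -/
private lemma sum_sq_mulVec_le {ι : Type*} {w : α → lp (fun _ : ι => ℂ) 2}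
    (hw : ∀ a, ‖w a‖ ≤ 1) {c : ι → α → ℂ} (hc : ∀ i, ∀ a, ‖c i a‖ ≤ 1)
    (hcw : ∀ i a, c i a = (w a : ∀ _ : ι, ℂ) i)
    (y : lp (fun _ : α => ℂ) 2) (F : Finset ι) :
    ∑ i ∈ F, ‖mulVec (c i) (hc i) y‖ ^ 2 ≤ ‖y‖ ^ 2 := by
  have h1 : ∀ i, ‖mulVec (c i) (hc i) y‖ ^ 2 = ∑' a, ‖c i a * y a‖ ^ 2 :=
    fun i => ((l2_hasSum_sq (mulVec (c i) (hc i) y)).tsum_eq).symm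
  calc ∑ i ∈ F, ‖mulVec (c i) (hc i) y‖ ^ 2
      = ∑ i ∈ F, ∑' a, ‖c i a * y a‖ ^ 2 := Finset.sum_congr rfl fun i _ => h1 i
    _ = ∑' a, ∑ i ∈ F, ‖c i a * y a‖ ^ 2 := by
        refine (Summable.tsum_finsetSum ?_).symm
        intro i _
        exact l2_summable_sq (mulVec (c i) (hc i) y)
    _ ≤ ∑' a, ‖y a‖ ^ 2 := by
        refine Summable.tsum_le_tsum (fun a => ?_)
          (summable_sum fun i _ => l2_summable_sq (mulVec (c i) (hc i) y))
          (l2_summable_sq y)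
        have hb : ∑ i ∈ F, ‖(w a : ∀ _ : ι, ℂ) i‖ ^ 2 ≤ ‖w a‖ ^ 2 :=
          sum_le_hasSum F (fun i _ => by positivity) (l2_hasSum_sq (w a))
        have hb1 : ∑ i ∈ F, ‖(w a : ∀ _ : ι, ℂ) i‖ ^ 2 ≤ 1 :=
          hb.trans (by nlinarith [hw a, norm_nonneg (w a)])
        calc ∑ i ∈ F, ‖c i a * y a‖ ^ 2
            = (∑ i ∈ F, ‖(w a : ∀ _ : ι, ℂ) i‖ ^ 2) * ‖y a‖ ^ 2 := by
              rw [Finset.sum_mul]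
              exact Finset.sum_congr rfl fun i _ => by
                rw [norm_mul, hcw i a]; ring
          _ ≤ 1 * ‖y a‖ ^ 2 := mul_le_mul_of_nonneg_right hb1 (by positivity)
          _ = ‖y a‖ ^ 2 := one_mul _
    _ = ‖y‖ ^ 2 := (l2_hasSum_sq y).tsum_eq

/-- The key lemma: the case where the families take values in an `ℓ²` space and
are bounded in norm by `1`. -/
private lemma key {ι S T : Type*} [DecidableEq S] [DecidableEq T]
    (u : S → lp (fun _ : ι => ℂ) 2) (v : T → lp (fun _ : ι => ℂ) 2)
    (hu : ∀ s, ‖u s‖ ≤ 1) (hv : ∀ t, ‖v t‖ ≤ 1)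
    (A : lp (fun _ : T => ℂ) 2 →L[ℂ] lp (fun _ : S => ℂ) 2) :
    ∃ B : lp (fun _ : T => ℂ) 2 →L[ℂ] lp (fun _ : S => ℂ) 2, ‖B‖ ≤ ‖A‖ ∧
      ∀ (s : S) (t : T),
        ⟪lp.single 2 s (1 : ℂ), B (lp.single 2 t (1 : ℂ))⟫_ℂ =
          ⟪u s, v t⟫_ℂ * ⟪lp.single 2 s (1 : ℂ), A (lp.single 2 t (1 : ℂ))⟫_ℂ := by
  classical
  have hcu : ∀ (i : ι), ∀ (s : S), ‖(u s : ∀ _ : ι, ℂ) i‖ ≤ 1 := fun i s =>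
    (lp.norm_apply_le_norm (by norm_num) (u s) i).trans (hu s)
  have hcv : ∀ (i : ι), ∀ (t : T), ‖(v t : ∀ _ : ι, ℂ) i‖ ≤ 1 := fun i t =>
    (lp.norm_apply_le_norm (by norm_num) (v t) i).trans (hv t)
  set U : ι → lp (fun _ : S => ℂ) 2 → lp (fun _ : S => ℂ) 2 :=
    fun i y => mulVec (fun s => (u s : ∀ _ : ι, ℂ) i) (hcu i) y with hUdef
  set V : ι → lp (fun _ : T => ℂ) 2 → lp (fun _ : T => ℂ) 2 :=
    fun i x => mulVec (fun t => (v t : ∀ _ : ι, ℂ) i) (hcv i) x with hVdef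
  have hUsq : ∀ (y : lp (fun _ : S => ℂ) 2) (F : Finset ι),
      ∑ i ∈ F, ‖U i y‖ ^ 2 ≤ ‖y‖ ^ 2 :=
    fun y F => sum_sq_mulVec_le hu hcu (fun _ _ => rfl) y F
  have hVsq : ∀ (x : lp (fun _ : T => ℂ) 2) (F : Finset ι),
      ∑ i ∈ F, ‖V i x‖ ^ 2 ≤ ‖x‖ ^ 2 :=
    fun x F => sum_sq_mulVec_le hv hcv (fun _ _ => rfl) x F
  -- Cauchy–Schwarz for partial sums
  have hCS : ∀ (y : lp (fun _ : S => ℂ) 2) (x : lp (fun _ : T => ℂ) 2) (F : Finset ι),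
      ∑ i ∈ F, ‖U i y‖ * ‖V i x‖ ≤ ‖y‖ * ‖x‖ := by
    intro y x F
    have h := Finset.sum_mul_sq_le_sq_mul_sq F (fun i => ‖U i y‖) (fun i => ‖V i x‖)
    have h2 : (∑ i ∈ F, ‖U i y‖ * ‖V i x‖) ^ 2 ≤ (‖y‖ * ‖x‖) ^ 2 := by
      calc (∑ i ∈ F, ‖U i y‖ * ‖V i x‖) ^ 2
          ≤ (∑ i ∈ F, ‖U i y‖ ^ 2) * (∑ i ∈ F, ‖V i x‖ ^ 2) := h
        _ ≤ ‖y‖ ^ 2 * ‖x‖ ^ 2 := by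
            refine mul_le_mul (hUsq y F) (hVsq x F) ?_ (by positivity)
            exact Finset.sum_nonneg fun i _ => by positivity
        _ = (‖y‖ * ‖x‖) ^ 2 := by ring
    have h0 : (0:ℝ) ≤ ∑ i ∈ F, ‖U i y‖ * ‖V i x‖ :=
      Finset.sum_nonneg fun i _ => mul_nonneg (norm_nonneg _) (norm_nonneg _)
    nlinarith [mul_nonneg (norm_nonneg y) (norm_nonneg x)]
  have hgsum : ∀ y x, Summable fun i => ‖U i y‖ * ‖V i x‖ := fun y x =>
    summable_of_sum_le (fun i => mul_nonneg (norm_nonneg _) (norm_nonneg _)) (hCS y x)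
  -- term bounds
  have hterm : ∀ y x (i : ι), ‖(⟪U i y, A (V i x)⟫_ℂ : ℂ)‖ ≤ ‖A‖ * (‖U i y‖ * ‖V i x‖) := by
    intro y x i
    calc ‖(⟪U i y, A (V i x)⟫_ℂ : ℂ)‖ ≤ ‖U i y‖ * ‖A (V i x)‖ := norm_inner_le_norm _ _
      _ ≤ ‖U i y‖ * (‖A‖ * ‖V i x‖) :=
          mul_le_mul_of_nonneg_left (A.le_opNorm _) (norm_nonneg _)
      _ = ‖A‖ * (‖U i y‖ * ‖V i x‖) := by ring
  have hterm' : ∀ y x (i : ι), ‖(⟪A (V i x), U i y⟫_ℂ : ℂ)‖ ≤ ‖A‖ * (‖U i y‖ * ‖V i x‖) := by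
    intro y x i
    calc ‖(⟪A (V i x), U i y⟫_ℂ : ℂ)‖ ≤ ‖A (V i x)‖ * ‖U i y‖ := norm_inner_le_norm _ _
      _ ≤ (‖A‖ * ‖V i x‖) * ‖U i y‖ :=
          mul_le_mul_of_nonneg_right (A.le_opNorm _) (norm_nonneg _)
      _ = ‖A‖ * (‖U i y‖ * ‖V i x‖) := by ring
  have hsumInner : ∀ y x, Summable fun i => (⟪U i y, A (V i x)⟫_ℂ : ℂ) := fun y x =>
    Summable.of_norm (Summable.of_nonneg_of_le (fun i => norm_nonneg _) (hterm y x)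
      ((hgsum y x).mul_left ‖A‖))
  have hsumInner' : ∀ y x, Summable fun i => (⟪A (V i x), U i y⟫_ℂ : ℂ) := fun y x =>
    Summable.of_norm (Summable.of_nonneg_of_le (fun i => norm_nonneg _) (hterm' y x)
      ((hgsum y x).mul_left ‖A‖))
  -- linearity of the rows
  have hUadd : ∀ (i : ι) y y', U i (y + y') = U i y + U i y' := fun i y y' =>
    mulVec_add _ _ _ _
  have hUsmul : ∀ (i : ι) (k : ℂ) y, U i (k • y) = k • U i y := fun i k y =>
    mulVec_smul _ _ _ _
  have hVadd : ∀ (i : ι) x x', V i (x + x') = V i x + V i x' := fun i x x' =>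
    mulVec_add _ _ _ _
  have hVsmul : ∀ (i : ι) (k : ℂ) x, V i (k • x) = k • V i x := fun i k x =>
    mulVec_smul _ _ _ _
  -- bound on the functional
  have hbound : ∀ y x, ‖∑' i, (⟪A (V i x), U i y⟫_ℂ : ℂ)‖ ≤ ‖A‖ * ‖x‖ * ‖y‖ := by
    intro y x
    have hs : Summable fun i => ‖(⟪A (V i x), U i y⟫_ℂ : ℂ)‖ :=
      Summable.of_nonneg_of_le (fun i => norm_nonneg _) (hterm' y x)
        ((hgsum y x).mul_left ‖A‖)
    refine (norm_tsum_le_tsum_norm hs).trans ?_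
    refine Summable.tsum_le_of_sum_le hs fun F => ?_
    calc ∑ i ∈ F, ‖(⟪A (V i x), U i y⟫_ℂ : ℂ)‖
        ≤ ∑ i ∈ F, ‖A‖ * (‖U i y‖ * ‖V i x‖) := Finset.sum_le_sum fun i _ => hterm' y x i
      _ = ‖A‖ * ∑ i ∈ F, ‖U i y‖ * ‖V i x‖ := by rw [Finset.mul_sum]
      _ ≤ ‖A‖ * (‖y‖ * ‖x‖) := mul_le_mul_of_nonneg_left (hCS y x F) (norm_nonneg A)
      _ = ‖A‖ * ‖x‖ * ‖y‖ := by ring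
  -- the dual functional
  set φ : lp (fun _ : T => ℂ) 2 → StrongDual ℂ (lp (fun _ : S => ℂ) 2) := fun x =>
    LinearMap.mkContinuous
      { toFun := fun y => ∑' i, (⟪A (V i x), U i y⟫_ℂ : ℂ)
        map_add' := fun y y' => by
          rw [← Summable.tsum_add (hsumInner' y x) (hsumInner' y' x)]
          exact tsum_congr fun i => by rw [hUadd, inner_add_right]
        map_smul' := fun k y => by
          rw [RingHom.id_apply, smul_eq_mul, ← tsum_mul_left]
          exact tsum_congr fun i => by rw [hUsmul, inner_smul_right] }
      (‖A‖ * ‖x‖) (fun y => hbound y x) with hφdef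
  have hφapp : ∀ x y, φ x y = ∑' i, (⟪A (V i x), U i y⟫_ℂ : ℂ) := fun x y => rfl
  set Bfun : lp (fun _ : T => ℂ) 2 → lp (fun _ : S => ℂ) 2 := fun x =>
    (InnerProductSpace.toDual ℂ (lp (fun _ : S => ℂ) 2)).symm (φ x) with hBfundef
  have hBinner : ∀ x y, (⟪y, Bfun x⟫_ℂ : ℂ) = ∑' i, (⟪U i y, A (V i x)⟫_ℂ : ℂ) := by
    intro x y
    have h1 : (⟪Bfun x, y⟫_ℂ : ℂ) = φ x y := InnerProductSpace.toDual_symm_apply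
    calc (⟪y, Bfun x⟫_ℂ : ℂ) = conj (⟪Bfun x, y⟫_ℂ : ℂ) := (inner_conj_symm _ _).symm
      _ = conj (φ x y) := by rw [h1]
      _ = star (∑' i, (⟪A (V i x), U i y⟫_ℂ : ℂ)) := by rw [hφapp, starRingEnd_apply]
      _ = ∑' i, star (⟪A (V i x), U i y⟫_ℂ : ℂ) := tsum_star
      _ = ∑' i, (⟪U i y, A (V i x)⟫_ℂ : ℂ) := tsum_congr fun i => by
            rw [← starRingEnd_apply, inner_conj_symm]
  have hBadd : ∀ x x', Bfun (x + x') = Bfun x + Bfun x' := by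
    intro x x'
    refine ext_inner_left ℂ fun y => ?_
    rw [inner_add_right, hBinner, hBinner, hBinner,
      ← Summable.tsum_add (hsumInner y x) (hsumInner y x')]
    exact tsum_congr fun i => by rw [hVadd, map_add, inner_add_right]
  have hBsmul : ∀ (k : ℂ) x, Bfun (k • x) = k • Bfun x := by
    intro k x
    refine ext_inner_left ℂ fun y => ?_
    rw [inner_smul_right, hBinner, hBinner, ← tsum_mul_left]
    exact tsum_congr fun i => by rw [hVsmul, map_smul, inner_smul_right]
  have hBnorm : ∀ x, ‖Bfun x‖ ≤ ‖A‖ * ‖x‖ := by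
    intro x
    rw [hBfundef]
    simp only []
    rw [LinearIsometryEquiv.norm_map]
    exact LinearMap.mkContinuous_norm_le _ (by positivity) _
  set B : lp (fun _ : T => ℂ) 2 →L[ℂ] lp (fun _ : S => ℂ) 2 :=
    LinearMap.mkContinuous
      { toFun := Bfun
        map_add' := hBadd
        map_smul' := fun k x => by simpa using hBsmul k x }
      ‖A‖ hBnorm with hBdef
  have hBapp : ∀ x, B x = Bfun x := fun x => rfl
  refine ⟨B, LinearMap.mkContinuous_norm_le _ (norm_nonneg A) _, ?_⟩
  intro s t
  have hUd : ∀ i : ι, U i (lp.single 2 s (1 : ℂ)) =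
      ((u s : ∀ _ : ι, ℂ) i) • lp.single 2 s (1 : ℂ) := by
    intro i
    apply lp.ext
    funext s'
    rw [lp.coeFn_smul, Pi.smul_apply]
    show (u s' : ∀ _ : ι, ℂ) i * (lp.single 2 s (1 : ℂ) : ∀ _ : S, ℂ) s' = _
    by_cases h : s' = s
    · subst h; simp [smul_eq_mul]
    · rw [lp.single_apply_ne 2 s _ h]; simp [smul_eq_mul]
  have hVd : ∀ i : ι, V i (lp.single 2 t (1 : ℂ)) =
      ((v t : ∀ _ : ι, ℂ) i) • lp.single 2 t (1 : ℂ) := by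
    intro i
    apply lp.ext
    funext t'
    rw [lp.coeFn_smul, Pi.smul_apply]
    show (v t' : ∀ _ : ι, ℂ) i * (lp.single 2 t (1 : ℂ) : ∀ _ : T, ℂ) t' = _
    by_cases h : t' = t
    · subst h; simp [smul_eq_mul]
    · rw [lp.single_apply_ne 2 t _ h]; simp [smul_eq_mul]
  rw [hBapp, hBinner]
  have hterm2 : ∀ i : ι, (⟪U i (lp.single 2 s (1 : ℂ)), A (V i (lp.single 2 t (1 : ℂ)))⟫_ℂ : ℂ)
      = conj ((u s : ∀ _ : ι, ℂ) i) * (v t : ∀ _ : ι, ℂ) i *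
        (⟪lp.single 2 s (1 : ℂ), A (lp.single 2 t (1 : ℂ))⟫_ℂ : ℂ) := by
    intro i
    rw [hUd i, hVd i, map_smul, inner_smul_left, inner_smul_right]
    ring
  calc (∑' i, (⟪U i (lp.single 2 s (1 : ℂ)), A (V i (lp.single 2 t (1 : ℂ)))⟫_ℂ : ℂ))
      = ∑' i, conj ((u s : ∀ _ : ι, ℂ) i) * (v t : ∀ _ : ι, ℂ) i *
          (⟪lp.single 2 s (1 : ℂ), A (lp.single 2 t (1 : ℂ))⟫_ℂ : ℂ) := tsum_congr hterm2
    _ = (∑' i, conj ((u s : ∀ _ : ι, ℂ) i) * (v t : ∀ _ : ι, ℂ) i) *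
          (⟪lp.single 2 s (1 : ℂ), A (lp.single 2 t (1 : ℂ))⟫_ℂ : ℂ) := tsum_mul_right
    _ = (⟪u s, v t⟫_ℂ : ℂ) *
          (⟪lp.single 2 s (1 : ℂ), A (lp.single 2 t (1 : ℂ))⟫_ℂ : ℂ) := by
        congr 1
        rw [lp.inner_eq_tsum]
        exact tsum_congr fun i => by rw [RCLike.inner_apply]; ring

end SchurAux

end SchurAux

/-- Schur multipliers arising from Hilbert-space factorizations -/
theorem stmt_16 {S T : Type*} [DecidableEq S] [DecidableEq T]
    {𝓗 : Type*} [NormedAddCommGroup 𝓗] [InnerProductSpace ℂ 𝓗]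
    (u : S → 𝓗) (v : T → 𝓗) (huv : ∀ (s : S) (t : T), ‖u s‖ * ‖v t‖ ≤ 1)
    (A : lp (fun _ : T => ℂ) 2 →L[ℂ] lp (fun _ : S => ℂ) 2) :
    ∃ B : lp (fun _ : T => ℂ) 2 →L[ℂ] lp (fun _ : S => ℂ) 2, ‖B‖ ≤ ‖A‖ ∧
      ∀ (s : S) (t : T),
        ⟪lp.single 2 s (1 : ℂ), B (lp.single 2 t (1 : ℂ))⟫_ℂ =
          ⟪u s, v t⟫_ℂ * ⟪lp.single 2 s (1 : ℂ), A (lp.single 2 t (1 : ℂ))⟫_ℂ := by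
  classical
  by_cases hvz : ∀ t, v t = 0
  · exact ⟨0, by simp, fun s t => by simp [hvz t]⟩
  by_cases huz : ∀ s, u s = 0
  · exact ⟨0, by simp, fun s t => by simp [huz s]⟩
  push_neg at hvz huz
  obtain ⟨t₀, ht₀⟩ := hvz
  obtain ⟨s₀, hs₀⟩ := huz
  have hus₀ : (0:ℝ) < ‖u s₀‖ := norm_pos_iff.mpr hs₀
  have hM : ∀ t, ‖v t‖ ≤ 1 / ‖u s₀‖ := fun t => by
    rw [le_div_iff₀ hus₀]
    calc ‖v t‖ * ‖u s₀‖ = ‖u s₀‖ * ‖v t‖ := by ring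
      _ ≤ 1 := huv s₀ t
  set d : ℝ := sSup (Set.range fun t => ‖v t‖) with hddef
  have hbdd : BddAbove (Set.range fun t => ‖v t‖) :=
    ⟨1 / ‖u s₀‖, by rintro _ ⟨t, rfl⟩; exact hM t⟩
  have hdpos : 0 < d :=
    lt_of_lt_of_le (norm_pos_iff.mpr ht₀) (le_csSup hbdd ⟨t₀, rfl⟩)
  have hvd : ∀ t, ‖v t‖ ≤ d := fun t => le_csSup hbdd ⟨t, rfl⟩
  have hud : ∀ s, d * ‖u s‖ ≤ 1 := by
    intro s
    by_cases h : u s = 0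
    · simp [h]
    · have hs : (0:ℝ) < ‖u s‖ := norm_pos_iff.mpr h
      have hle : d ≤ 1 / ‖u s‖ := by
        refine csSup_le ⟨‖v t₀‖, ⟨t₀, rfl⟩⟩ ?_
        rintro _ ⟨t, rfl⟩
        rw [le_div_iff₀ hs]
        calc ‖v t‖ * ‖u s‖ = ‖u s‖ * ‖v t‖ := by ring
          _ ≤ 1 := huv s t
      calc d * ‖u s‖ ≤ (1 / ‖u s‖) * ‖u s‖ :=
            mul_le_mul_of_nonneg_right hle hs.le
        _ = 1 := by field_simp
  -- pass to the completion and a Hilbert basis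
  obtain ⟨w, b, -⟩ := exists_hilbertBasis ℂ (UniformSpace.Completion 𝓗)
  set e := b.repr with hedef
  have hdC : ((d : ℂ)) ≠ 0 := by
    simpa using hdpos.ne'
  set u' : S → lp (fun _ : w => ℂ) 2 :=
    fun s => e ((d : ℂ) • ((u s : UniformSpace.Completion 𝓗))) with hu'def
  set v' : T → lp (fun _ : w => ℂ) 2 :=
    fun t => e (((d : ℂ)⁻¹) • ((v t : UniformSpace.Completion 𝓗))) with hv'def
  have hu' : ∀ s, ‖u' s‖ ≤ 1 := by
    intro s
    rw [hu'def]
    simp only [LinearIsometryEquiv.norm_map, norm_smul, Complex.norm_real,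
      UniformSpace.Completion.norm_coe]
    rw [Real.norm_of_nonneg hdpos.le]
    exact hud s
  have hv' : ∀ t, ‖v' t‖ ≤ 1 := by
    intro t
    rw [hv'def]
    simp only [LinearIsometryEquiv.norm_map, norm_smul,
      UniformSpace.Completion.norm_coe]
    have h1 : ‖((d:ℂ))⁻¹‖ = d⁻¹ := by
      rw [norm_inv, Complex.norm_real, Real.norm_of_nonneg hdpos.le]
    rw [h1]
    calc d⁻¹ * ‖v t‖ ≤ d⁻¹ * d :=
          mul_le_mul_of_nonneg_left (hvd t) (by positivity)
      _ = 1 := inv_mul_cancel₀ hdpos.ne'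
  have hinner : ∀ s t, (⟪u' s, v' t⟫_ℂ : ℂ) = ⟪u s, v t⟫_ℂ := by
    intro s t
    rw [hu'def, hv'def]
    rw [LinearIsometryEquiv.inner_map_map, inner_smul_left, inner_smul_right,
      UniformSpace.Completion.inner_coe]
    rw [Complex.conj_ofReal]
    field_simp
  obtain ⟨B, hB, hBe⟩ := SchurAux.key u' v' hu' hv' A
  exact ⟨B, hB, fun s t => by rw [hBe s t, hinner s t]⟩
end
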